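/- arXiv:2508.15296 — 7 statements merged into one kernel-verified Lean document; each statement's English description precedes it below -/
import Mathlib

section
/- For every finite simple graph G on a set I of at least two students that is not a complete graph, there exists a matching market with student acquaintance graph G and two feasible locally envy-free matchings Y1 and Y2 such that no feasible locally envy-free matching Pareto dominates or equals both Y1 and Y2; consequently, the set of feasible locally envy-free matchings, partially ordered by Y ≤ Y' iff Y' Pareto dominates Y or Y' = Y, is not a lattice. -/
section Defs

variable {I S : Type*}

/-- Students' preference profiles: `pI i a b` means student `i` strictly prefers option `a`
to option `b`, where `none` represents being unmatched. -/
abbrev StudentPrefs (I S : Type*) := I → Option S → Option S → Prop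

/-- Schools' preference profiles: `pS s a b` means school `s` strictly prefers `a` to `b`,
where `none` represents leaving a seat vacant. -/
abbrev SchoolPrefs (I S : Type*) := S → Option I → Option I → Prop

/-- Each student's preference is a strict linear order on `S ∪ {∅}`. -/
def ValidStudentPrefs (pI : StudentPrefs I S) : Prop :=
  ∀ i, IsStrictTotalOrder (Option S) (pI i)

/-- Each school's preference is a strict linear order on `I ∪ {∅}`. -/
def ValidSchoolPrefs (pS : SchoolPrefs I S) : Prop :=
  ∀ s, IsStrictTotalOrder (Option I) (pS s)

/-- A matching `μ : I → Option S` is feasible if each school's quota is respected. -/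
def Feasible (q : S → ℕ) (μ : I → Option S) : Prop :=
  ∀ s : S, {i | μ i = some s}.ncard ≤ q s

/-- Student `i` has justified envy toward student `i'` in matching `μ`. -/
def JEnvy (pI : StudentPrefs I S) (pS : SchoolPrefs I S)
    (μ : I → Option S) (i i' : I) : Prop :=
  ∃ s : S, μ i' = some s ∧ pI i (some s) (μ i) ∧ pS s (some i) (some i')

/-- Local envy: justified envy toward a neighbor in the student acquaintance graph `G`. -/
def LocalEnvy (G : SimpleGraph I) (pI : StudentPrefs I S) (pS : SchoolPrefs I S)
    (μ : I → Option S) (i i' : I) : Prop :=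
  JEnvy pI pS μ i i' ∧ G.Adj i i'

/-- Locally envy-free matching. -/
def LEF (G : SimpleGraph I) (pI : StudentPrefs I S) (pS : SchoolPrefs I S)
    (μ : I → Option S) : Prop :=
  ∀ i i', ¬ LocalEnvy G pI pS μ i i'

/-- Fair (justified-envy-free) matching. -/
def Fair (pI : StudentPrefs I S) (pS : SchoolPrefs I S) (μ : I → Option S) : Prop :=
  ∀ i i', ¬ JEnvy pI pS μ i i'

/-- Locally envy-free up to `k` peers: every student has local envy toward at most `k` students. -/
def LocEF (G : SimpleGraph I) (pI : StudentPrefs I S) (pS : SchoolPrefs I S)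
    (k : ℕ) (μ : I → Option S) : Prop :=
  ∀ i, {i' | LocalEnvy G pI pS μ i i'}.ncard ≤ k

/-- Locally envy-receiving-free up to `k` peers: for every student at most `k` students
have local envy toward her. -/
def LocERF (G : SimpleGraph I) (pI : StudentPrefs I S) (pS : SchoolPrefs I S)
    (k : ℕ) (μ : I → Option S) : Prop :=
  ∀ i, {i' | LocalEnvy G pI pS μ i' i}.ncard ≤ k

/-- `μ'` Pareto dominates `μ`. -/
def Dominates (pI : StudentPrefs I S) (μ' μ : I → Option S) : Prop :=
  (∀ i, μ' i = μ i ∨ pI i (μ' i) (μ i)) ∧ (∃ i, pI i (μ' i) (μ i))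

/-- A feasible matching is Pareto efficient if no feasible matching Pareto dominates it. -/
def ParetoEfficient (pI : StudentPrefs I S) (q : S → ℕ) (μ : I → Option S) : Prop :=
  ∀ μ', Feasible q μ' → ¬ Dominates pI μ' μ

/-- `(i, s)` is a mutually-best pair. -/
def MBPair (pI : StudentPrefs I S) (pS : SchoolPrefs I S) (i : I) (s : S) : Prop :=
  (∀ x : Option S, x ≠ some s → pI i (some s) x) ∧
  (∀ y : Option I, y ≠ some i → pS s (some i) y)

/-- A matching is mutually-best if every mutually-best pair is matched. -/
def MutuallyBest (pI : StudentPrefs I S) (pS : SchoolPrefs I S) (μ : I → Option S) : Prop :=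
  ∀ i s, MBPair pI pS i s → μ i = some s

/-- The set of the `m` most-preferred elements under a strict order `r`
(`r j i` meaning `j` is strictly preferred to `i`). -/
def topSet (r : I → I → Prop) (m : ℕ) : Set I := {i | {j | r j i}.ncard < m}

/-- A strict linear order on `I` is single-peaked on the graph `G` if for each
`m ∈ {1, …, |I|}` the set of the `m` most-preferred elements induces a connected
subgraph of `G`. -/
def SinglePeakedOn (G : SimpleGraph I) (r : I → I → Prop) : Prop :=
  ∀ m : ℕ, 1 ≤ m → m ≤ Nat.card I → (G.induce (topSet r m)).Connected

/-- `(T, bag)` is a tree decomposition of `G`. -/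
structure IsTreeDecomp {V : Type*} (G : SimpleGraph I) (T : SimpleGraph V)
    (bag : V → Set I) : Prop where
  tree : T.IsTree
  covers : ∀ i : I, ∃ t, i ∈ bag t
  subtree : ∀ i : I, (T.induce {t | i ∈ bag t}).Connected
  edges : ∀ ⦃i i' : I⦄, G.Adj i i' → ∃ t, i ∈ bag t ∧ i' ∈ bag t

/-- `G` has treewidth at most `k`: it admits a tree decomposition of width at most `k`. -/
def TreewidthAtMost (G : SimpleGraph I) (k : ℕ) : Prop :=
  ∃ (V : Type) (T : SimpleGraph V) (bag : V → Set I),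
    Finite V ∧ IsTreeDecomp G T bag ∧ ∀ t, (bag t).ncard ≤ k + 1

/-- `G` is `k`-degenerate: there is a linear ordering of the vertices (an injection
into `ℕ`) such that every vertex has at most `k` neighbors occurring strictly later. -/
def Degenerate (G : SimpleGraph I) (k : ℕ) : Prop :=
  ∃ ord : I → ℕ, Function.Injective ord ∧
    ∀ i, {i' | G.Adj i i' ∧ ord i < ord i'}.ncard ≤ k

/-- The first index `j` in the list `L` of bags such that `i ∈ bag (L.get j)`. -/
noncomputable def firstBagIdx {V : Type*} (L : List V) (bag : V → Set I) (i : I) : ℕ :=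
  sInf {j | ∃ h : j < L.length, i ∈ bag (L.get ⟨j, h⟩)}

/-- A strict linear order on `I` is single-peaked on a tree decomposition `(T, bag)` if
there is a sequence of nodes covering all vertices, each node after the first adjacent in
`T` to an earlier one, such that vertices first covered earlier are preferred. -/
def SinglePeakedOnTD {V : Type*} (T : SimpleGraph V) (bag : V → Set I)
    (r : I → I → Prop) : Prop :=
  ∃ L : List V,
    (∀ i : I, ∃ j : ℕ, ∃ h : j < L.length, i ∈ bag (L.get ⟨j, h⟩)) ∧
    (∀ j : ℕ, ∀ h : j < L.length, 1 ≤ j →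
      ∃ j' : ℕ, ∃ h' : j' < L.length, j' < j ∧ T.Adj (L.get ⟨j', h'⟩) (L.get ⟨j, h⟩)) ∧
    (∀ i i' : I, firstBagIdx L bag i < firstBagIdx L bag i' → r i i')

/-- `(i, s)` is a blocking pair for the feasible matching `μ`. -/
def BlockingPair (pI : StudentPrefs I S) (pS : SchoolPrefs I S) (q : S → ℕ)
    (μ : I → Option S) (i : I) (s : S) : Prop :=
  μ i ≠ some s ∧ pI i (some s) (μ i) ∧
  (({i' | μ i' = some s}.ncard < q s ∧ pS s (some i) none) ∨
   ({i' | μ i' = some s}.ncard = q s ∧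
     ∃ i₀, μ i₀ = some s ∧
       (∀ i₁, μ i₁ = some s → i₁ = i₀ ∨ pS s (some i₁) (some i₀)) ∧
       pS s (some i) (some i₀)))

/-- A matching is locally stable if for every blocking pair `(i, s)`, no neighbor of `i`
is matched to `s`. -/
def LocallyStable (G : SimpleGraph I) (pI : StudentPrefs I S) (pS : SchoolPrefs I S)
    (q : S → ℕ) (μ : I → Option S) : Prop :=
  ∀ i s, BlockingPair pI pS q μ i s → ∀ i', G.Adj i i' → μ i' ≠ some s

/-- Strategyproofness of a mechanism `f` (the schools' side being fixed). -/
def Strategyproof (f : StudentPrefs I S → (I → Option S)) : Prop :=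
  ∀ pI : StudentPrefs I S, ValidStudentPrefs pI → ∀ i : I,
    ∀ pI' : StudentPrefs I S, ValidStudentPrefs pI' →
      (∀ i'' : I, i'' ≠ i → pI' i'' = pI i'') →
      f pI i = f pI' i ∨ pI i (f pI i) (f pI' i)

end Defs
/-- for any finite non-complete graph on at least two students there is a
matching market whose set of feasible LEF matchings (ordered by Pareto dominance-or-equality)
is not a lattice: two feasible LEF matchings admit no common upper bound. -/
theorem lef_matchings_no_lattice {I : Type*} [Fintype I] (hI : 2 ≤ Fintype.card I)
    (G : SimpleGraph I) (hG : G ≠ ⊤) :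
    ∃ (S : Type) (_ : Finite S) (pI : StudentPrefs I S) (pS : SchoolPrefs I S) (q : S → ℕ),
      ValidStudentPrefs pI ∧ ValidSchoolPrefs pS ∧
      ∃ Y1 Y2 : I → Option S,
        Feasible q Y1 ∧ LEF G pI pS Y1 ∧ Feasible q Y2 ∧ LEF G pI pS Y2 ∧
        ¬ ∃ Y : I → Option S, Feasible q Y ∧ LEF G pI pS Y ∧
            (Dominates pI Y Y1 ∨ Y = Y1) ∧ (Dominates pI Y Y2 ∨ Y = Y2) := by
  classical
  -- find two distinct non-adjacent students
  obtain ⟨a, b, hab, hnadj⟩ : ∃ a b : I, a ≠ b ∧ ¬ G.Adj a b := by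
    by_contra h
    push_neg at h
    apply hG
    ext x y
    simp only [SimpleGraph.top_adj]
    exact ⟨fun hadj => hadj.ne, fun hne => h x y hne⟩
  -- the market: one school, quota 1
  set top : I → Option Unit := fun i => if i = a ∨ i = b then some () else none with htop
  set pI : StudentPrefs I Unit := fun i x y => x ≠ y ∧ x = top i with hpIdef
  set e := Fintype.equivFin (Option I) with he
  set g : Option I → ℕ := fun x => if x = some a then 0 else if x = some b then 1
      else (e x : ℕ) + 2 with hgdef
  set pS : SchoolPrefs I Unit := fun _ x y => g x < g y with hpSdef
  have hga : g (some a) = 0 := by simp [hgdef]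
  have hgb : g (some b) = 1 := by simp [hgdef, hab.symm]
  have hg0 : ∀ x, g x = 0 → x = some a := by
    intro x hx
    by_contra hxa
    by_cases hxb : x = some b
    · rw [hxb, hgb] at hx; omega
    · simp [hgdef, hxa, hxb] at hx
  have hginj : Function.Injective g := by
    intro x y hxy
    simp only [hgdef] at hxy
    split_ifs at hxy with h1 h2 h3 h4 h5 h6 h7
    all_goals first
      | (subst_vars; rfl)
      | omega
      | (rw [h1, h3])
      | (rw [h2, h5])
      | (exact e.injective (Fin.val_injective (by omega)))
  refine ⟨Unit, inferInstance, pI, pS, fun _ => 1, ?_, ?_, ?_⟩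
  · -- valid student prefs
    intro i
    have key : ∀ t x y : Option Unit, x ≠ y → t = x ∨ t = y := by decide
    exact { trichotomous := fun x y => by
              refine fun hn1 hn2 => ((?_ : pI i x y ∨ x = y ∨ pI i y x).resolve_left hn1).resolve_right hn2
              by_cases hxy : x = y
              · exact Or.inr (Or.inl hxy)
              · rcases key (top i) x y hxy with h | h
                · exact Or.inl ⟨hxy, h.symm⟩
                · exact Or.inr (Or.inr ⟨Ne.symm hxy, h.symm⟩)
            irrefl := fun x hx => hx.1 rfl
            trans := fun x y z hxy hyz => absurd (hxy.2.trans hyz.2.symm) hxy.1 }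
  · -- valid school prefs
    intro _
    exact { trichotomous := fun x y => by
              refine fun hn1 hn2 => ((?_ : g x < g y ∨ x = y ∨ g y < g x).resolve_left hn1).resolve_right hn2
              rcases lt_trichotomy (g x) (g y) with h | h | h
              · exact Or.inl h
              · exact Or.inr (Or.inl (hginj h))
              · exact Or.inr (Or.inr h)
            irrefl := fun x hx => lt_irrefl _ hx
            trans := fun x y z hxy hyz => lt_trans hxy hyz }
  · -- the two matchings
    set Y1 : I → Option Unit := fun i => if i = a then some () else none with hY1def
    set Y2 : I → Option Unit := fun i => if i = b then some () else none with hY2def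
    have hset1 : {i | Y1 i = some ()} = {a} := by
      ext i
      simp only [hY1def, Set.mem_setOf_eq, Set.mem_singleton_iff]
      constructor
      · intro h; by_contra hne; simp [hne] at h
      · intro h; simp [h]
    have hset2 : {i | Y2 i = some ()} = {b} := by
      ext i
      simp only [hY2def, Set.mem_setOf_eq, Set.mem_singleton_iff]
      constructor
      · intro h; by_contra hne; simp [hne] at h
      · intro h; simp [h]
    refine ⟨Y1, Y2, ?_, ?_, ?_, ?_, ?_⟩
    · intro s
      have : {i | Y1 i = some s} = {a} := hset1
      rw [this, Set.ncard_singleton]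
    · -- LEF Y1
      rintro i i' ⟨⟨s, hmu, _hpref, hsch⟩, _hadj⟩
      have hia : i' = a := by
        by_contra hne
        simp [hY1def, hne] at hmu
      rw [hia] at hsch
      have : g (some i) < g (some a) := hsch
      omega
    · intro s
      have : {i | Y2 i = some s} = {b} := hset2
      rw [this, Set.ncard_singleton]
    · -- LEF Y2
      rintro i i' ⟨⟨s, hmu, _hpref, hsch⟩, hadj⟩
      have hib : i' = b := by
        by_contra hne
        simp [hY2def, hne] at hmu
      have hia : i = a := by
        rw [hib] at hsch
        have h1 : g (some i) < g (some b) := hsch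
        have := hg0 (some i) (by omega)
        exact Option.some_injective _ this
      rw [hia, hib] at hadj
      exact hnadj hadj
    · -- no common upper bound
      rintro ⟨Y, hYf, _hYlef, hY1, hY2⟩
      have htopa : top a = some () := by simp [htop]
      have htopb : top b = some () := by simp [htop]
      have hYa : Y a = some () := by
        rcases hY1 with hd | rfl
        · rcases hd.1 a with h | h
          · rw [h]; simp [hY1def]
          · exact h.2.trans htopa
        · simp [hY1def]
      have hYb : Y b = some () := by
        rcases hY2 with hd | rfl
        · rcases hd.1 b with h | h
          · rw [h]; simp [hY2def]
          · exact h.2.trans htopb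
        · simp [hY2def]
      have hsub : ({a, b} : Set I) ⊆ {i | Y i = some ()} := by
        rintro x hx
        rcases hx with rfl | rfl
        · exact hYa
        · exact hYb
      have h2 : 2 ≤ {i | Y i = some ()}.ncard := by
        have hle := Set.ncard_le_ncard hsub (Set.toFinite _)
        rwa [Set.ncard_pair hab] at hle
      have h1 := hYf ()
      simp only at h1
      omega
end

section
/- There exists a matching market with three students I = {i1, i2, i3}, three schools each with quota one, and student acquaintance graph equal to the path with edges {i1,i2} and {i2,i3}, in which no feasible matching is both Pareto efficient and locally envy-free. -/
/-- Rank functions for the counterexample (smaller rank = more preferred). -/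
def exRI : Fin 3 → Option (Fin 3) → ℕ
  | _, none => 3
  | i, some s => !![0,1,2; 1,0,2; 0,1,2] i s

def exRS : Fin 3 → Option (Fin 3) → ℕ
  | _, none => 3
  | s, some i => !![1,0,2; 0,2,1; 0,1,2] s i

abbrev exPI : StudentPrefs (Fin 3) (Fin 3) := fun i a b => exRI i a < exRI i b
abbrev exPS : SchoolPrefs (Fin 3) (Fin 3) := fun s a b => exRS s a < exRS s b

lemma ncard_filter (p : Fin 3 → Prop) [DecidablePred p] :
    {i | p i}.ncard = (Finset.univ.filter p).card := by
  rw [← Set.ncard_coe_finset]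
  congr 1
  ext x
  simp

set_option maxRecDepth 10000 in
/-- there is a matching market on three students and three schools with unit
quotas whose acquaintance graph is the path i1 - i2 - i3, in which no feasible matching is
both Pareto efficient and locally envy-free. -/
theorem no_pe_lef_on_path :
    ∃ (pI : StudentPrefs (Fin 3) (Fin 3)) (pS : SchoolPrefs (Fin 3) (Fin 3)) (q : Fin 3 → ℕ),
      ValidStudentPrefs pI ∧ ValidSchoolPrefs pS ∧ (∀ s, q s = 1) ∧
      ¬ ∃ μ : Fin 3 → Option (Fin 3), Feasible q μ ∧ ParetoEfficient pI q μ ∧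
          LEF (SimpleGraph.pathGraph 3) pI pS μ := by
  refine ⟨exPI, exPS, fun _ => 1, ?_, ?_, fun _ => rfl, ?_⟩
  · have h1 : ∀ (i : Fin 3) (a b : Option (Fin 3)), exPI i a b ∨ a = b ∨ exPI i b a := by decide
    have h2 : ∀ (i : Fin 3) (a : Option (Fin 3)), ¬ exPI i a a := by decide
    have h3 : ∀ (i : Fin 3) (a b c : Option (Fin 3)), exPI i a b → exPI i b c → exPI i a c := by
      decide
    exact fun i => { trichotomous := fun a b hab hba => ((h1 i a b).resolve_left hab).resolve_right hba, irrefl := h2 i, trans := h3 i }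
  · have h1 : ∀ (s : Fin 3) (a b : Option (Fin 3)), exPS s a b ∨ a = b ∨ exPS s b a := by decide
    have h2 : ∀ (s : Fin 3) (a : Option (Fin 3)), ¬ exPS s a a := by decide
    have h3 : ∀ (s : Fin 3) (a b c : Option (Fin 3)), exPS s a b → exPS s b c → exPS s a c := by
      decide
    exact fun s => { trichotomous := fun a b hab hba => ((h1 s a b).resolve_left hab).resolve_right hba, irrefl := h2 s, trans := h3 s }
  · rintro ⟨μ, hF, hPE, hL⟩
    have feas_iff : ∀ ν : Fin 3 → Option (Fin 3),
        Feasible (fun _ => 1) ν ↔ ∀ s, (Finset.univ.filter fun i => ν i = some s).card ≤ 1 := by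
      intro ν
      unfold Feasible
      constructor
      · intro h s; rw [← ncard_filter]; exact h s
      · intro h s; rw [ncard_filter]; exact h s
    have key : ∀ ν : Fin 3 → Option (Fin 3),
        (∀ s, (Finset.univ.filter fun i => ν i = some s).card ≤ 1) →
        (∃ ν' : Fin 3 → Option (Fin 3),
          (∀ s, (Finset.univ.filter fun i => ν' i = some s).card ≤ 1) ∧
          ((∀ i, ν' i = ν i ∨ exPI i (ν' i) (ν i)) ∧ (∃ i, exPI i (ν' i) (ν i)))) ∨
        (∃ i i' : Fin 3, ((i : ℕ) + 1 = (i' : ℕ) ∨ (i' : ℕ) + 1 = (i : ℕ)) ∧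
          (∃ s : Fin 3, ν i' = some s ∧ exPI i (some s) (ν i) ∧
            exPS s (some i) (some i'))) := by decide
    rcases key μ ((feas_iff μ).mp hF) with ⟨ν', hν', hdom⟩ | ⟨i, i', hadj, henv⟩
    · exact hPE ν' ((feas_iff ν').mpr hν') hdom
    · exact hL i i' ⟨henv, SimpleGraph.pathGraph_adj.mpr hadj⟩
end

section
/- There exist a set of three students I = {i1, i2, i3} with student acquaintance graph equal to the path with edges {i1,i2} and {i2,i3}, three schools each with quota one, and school preferences whose restrictions to I are single-peaked on this path, such that no mechanism (a function assigning a feasible matching to every profile of students' strict linear orders on S ∪ {∅}) is simultaneously strategyproof, and such that its output matching is Pareto efficient and locally envy-free for every profile of students' preferences. -/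
namespace NoSPAux

abbrev rkA : Option (Fin 3) → ℕ := fun x => x.casesOn 3 (fun k => (k : ℕ))
abbrev rkB : Option (Fin 3) → ℕ := fun x => x.casesOn 3 (fun k => ![1, 0, 2] k)
abbrev rkSch : Fin 3 → Option (Fin 3) → ℕ :=
  fun s x => x.casesOn 3 (fun i => ![![0, 1, 2], ![2, 1, 0], ![1, 0, 2]] s i)

abbrev mypS : SchoolPrefs (Fin 3) (Fin 3) := fun s x y => rkSch s x < rkSch s y

abbrev rk1 : Fin 3 → Option (Fin 3) → ℕ := ![rkA, rkA, rkA]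
abbrev rk2 : Fin 3 → Option (Fin 3) → ℕ := ![rkA, rkB, rkA]
abbrev rk3 : Fin 3 → Option (Fin 3) → ℕ := ![rkB, rkB, rkA]

abbrev mkP (rk : Fin 3 → Option (Fin 3) → ℕ) : StudentPrefs (Fin 3) (Fin 3) :=
  fun i x y => rk i x < rk i y

instance pathAdjDec : DecidableRel (SimpleGraph.pathGraph 3).Adj :=
  fun _ _ => decidable_of_iff _ SimpleGraph.pathGraph_adj.symm

lemma sto_of_inj {α : Type} (rk : α → ℕ) (h : ∀ a b, rk a = rk b → a = b) :
    IsStrictTotalOrder α (fun a b => rk a < rk b) where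
  trichotomous a b := by
    rcases Nat.lt_trichotomy (rk a) (rk b) with h' | h' | h'
    · exact fun h1 _ => absurd h' h1
    · exact fun _ _ => h a b h'
    · exact fun _ h2 => absurd h' h2
  irrefl a := Nat.lt_irrefl _
  trans a b c := Nat.lt_trans

lemma valid_mkP (rk : Fin 3 → Option (Fin 3) → ℕ)
    (h : ∀ i a b, rk i a = rk i b → a = b) : ValidStudentPrefs (mkP rk) :=
  fun i => sto_of_inj (rk i) (h i)

lemma ncard_eq {α : Type} [Fintype α] (p : α → Prop) [DecidablePred p] :
    {i | p i}.ncard = (Finset.univ.filter p).card := by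
  rw [Set.ncard_eq_toFinset_card', Set.toFinset_setOf]

lemma feas_iff (μ : Fin 3 → Option (Fin 3)) :
    Feasible (fun _ => 1) μ ↔
      ∀ s : Fin 3, (Finset.univ.filter (fun i => μ i = some s)).card ≤ 1 := by
  unfold Feasible
  refine forall_congr' fun s => ?_
  rw [ncard_eq]

abbrev Feas' (μ : Fin 3 → Option (Fin 3)) : Prop :=
  ∀ s : Fin 3, (Finset.univ.filter (fun i => μ i = some s)).card ≤ 1

abbrev PE' (rk : Fin 3 → Option (Fin 3) → ℕ) (μ : Fin 3 → Option (Fin 3)) : Prop :=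
  ∀ μ' : Fin 3 → Option (Fin 3), Feas' μ' →
    ¬ ((∀ i, μ' i = μ i ∨ rk i (μ' i) < rk i (μ i)) ∧ (∃ i, rk i (μ' i) < rk i (μ i)))

abbrev LEF' (rk : Fin 3 → Option (Fin 3) → ℕ) (μ : Fin 3 → Option (Fin 3)) : Prop :=
  ∀ i i' : Fin 3,
    ¬ ((∃ s : Fin 3, μ i' = some s ∧ rk i (some s) < rk i (μ i) ∧
          rkSch s (some i) < rkSch s (some i')) ∧ (SimpleGraph.pathGraph 3).Adj i i')

lemma charOf (rk : Fin 3 → Option (Fin 3) → ℕ)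
    (f : StudentPrefs (Fin 3) (Fin 3) → (Fin 3 → Option (Fin 3)))
    (hfeas : ∀ pI, ValidStudentPrefs pI → Feasible (fun _ => 1) (f pI))
    (hvalid : ValidStudentPrefs (mkP rk))
    (hgood : ∀ pI, ValidStudentPrefs pI →
      ParetoEfficient pI (fun _ => 1) (f pI) ∧
        LEF (SimpleGraph.pathGraph 3) pI mypS (f pI)) :
    Feas' (f (mkP rk)) ∧ PE' rk (f (mkP rk)) ∧ LEF' rk (f (mkP rk)) := by
  obtain ⟨hpe, hlef⟩ := hgood _ hvalid
  refine ⟨(feas_iff _).mp (hfeas _ hvalid), ?_, ?_⟩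
  · intro μ' hμ' hd
    exact hpe μ' ((feas_iff _).mpr hμ') hd
  · exact hlef

set_option maxHeartbeats 4000000 in
set_option maxRecDepth 10000 in
lemma key1 : ∀ μ : Fin 3 → Option (Fin 3), Feas' μ → PE' rk1 μ → LEF' rk1 μ →
    μ = ![some 0, some 2, some 1] := by decide

set_option maxHeartbeats 4000000 in
set_option maxRecDepth 10000 in
set_option synthInstance.maxHeartbeats 400000 in
set_option synthInstance.maxSize 1000 in
lemma key2 : ∀ μ : Fin 3 → Option (Fin 3), Feas' μ → PE' rk2 μ → LEF' rk2 μ →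
    μ = ![some 0, some 2, some 1] ∨ μ = ![some 2, some 1, some 0] := by decide

set_option maxHeartbeats 4000000 in
set_option maxRecDepth 10000 in
lemma key3 : ∀ μ : Fin 3 → Option (Fin 3), Feas' μ → PE' rk3 μ → LEF' rk3 μ →
    μ = ![some 2, some 1, some 0] := by decide

lemma connSingle {S : Set (Fin 3)} (a : Fin 3) (ha : a ∈ S) (hS : ∀ x ∈ S, x = a) :
    ((SimpleGraph.pathGraph 3).induce S).Connected := by
  haveI : Nonempty S := ⟨⟨a, ha⟩⟩
  refine SimpleGraph.Connected.mk fun u v => ?_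
  have : u = v := Subtype.ext ((hS u.1 u.2).trans (hS v.1 v.2).symm)
  rw [this]

lemma connOf {S : Set (Fin 3)} (h1 : (1 : Fin 3) ∈ S) :
    ((SimpleGraph.pathGraph 3).induce S).Connected := by
  have key : ∀ u : S, ((SimpleGraph.pathGraph 3).induce S).Reachable u ⟨1, h1⟩ := by
    rintro ⟨x, hx⟩
    fin_cases x
    · exact SimpleGraph.Adj.reachable (by simp [SimpleGraph.pathGraph_adj])
    · exact SimpleGraph.Reachable.refl _
    · exact SimpleGraph.Adj.reachable (by simp [SimpleGraph.pathGraph_adj])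
  haveI : Nonempty S := ⟨⟨1, h1⟩⟩
  exact SimpleGraph.Connected.mk fun u v => (key u).trans (key v).symm

end NoSPAux

/-- there are school preferences that are single-peaked on the path
i1 - i2 - i3 (with three schools of unit quota) such that no mechanism is simultaneously
strategyproof and produces, for every profile of students' preferences, a feasible matching
that is Pareto efficient and locally envy-free. -/
theorem no_sp_pe_lef_mechanism_on_path :
    ∃ (pS : SchoolPrefs (Fin 3) (Fin 3)) (q : Fin 3 → ℕ),
      ValidSchoolPrefs pS ∧ (∀ s, q s = 1) ∧
      (∀ s : Fin 3,
        SinglePeakedOn (SimpleGraph.pathGraph 3) (fun i i' => pS s (some i) (some i'))) ∧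
      ∀ f : StudentPrefs (Fin 3) (Fin 3) → (Fin 3 → Option (Fin 3)),
        (∀ pI, ValidStudentPrefs pI → Feasible q (f pI)) →
        ¬ (Strategyproof f ∧
            ∀ pI, ValidStudentPrefs pI →
              ParetoEfficient pI q (f pI) ∧ LEF (SimpleGraph.pathGraph 3) pI pS (f pI)) := by
  classical
  open NoSPAux in
  refine ⟨mypS, fun _ => 1, ?_, fun _ => rfl, ?_, ?_⟩
  · intro s
    exact sto_of_inj (rkSch s) (by fin_cases s <;> decide)
  · intro s m hm1 hm3
    rw [show Nat.card (Fin 3) = 3 by simp] at hm3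
    have hts : topSet (fun i i' : Fin 3 => mypS s (some i) (some i')) m =
        {i : Fin 3 |
          (Finset.univ.filter (fun j : Fin 3 => rkSch s (some j) < rkSch s (some i))).card < m} := by
      ext i
      simp only [topSet, Set.mem_setOf_eq, ncard_eq]
    rw [hts]
    interval_cases m
    · fin_cases s
      · exact connSingle 0 (by decide) (by decide)
      · exact connSingle 2 (by decide) (by decide)
      · exact connOf (by decide)
    · fin_cases s <;> exact connOf (by decide)
    · fin_cases s <;> exact connOf (by decide)
  · rintro f hfeas ⟨hsp, hgood⟩
    have v1 : ValidStudentPrefs (mkP rk1) := valid_mkP _ (by decide)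
    have v2 : ValidStudentPrefs (mkP rk2) := valid_mkP _ (by decide)
    have v3 : ValidStudentPrefs (mkP rk3) := valid_mkP _ (by decide)
    obtain ⟨hf1, hp1, hl1⟩ := charOf rk1 f hfeas v1 hgood
    obtain ⟨hf2, hp2, hl2⟩ := charOf rk2 f hfeas v2 hgood
    obtain ⟨hf3, hp3, hl3⟩ := charOf rk3 f hfeas v3 hgood
    have h1 := key1 _ hf1 hp1 hl1
    have h3 := key3 _ hf3 hp3 hl3
    rcases key2 _ hf2 hp2 hl2 with h2 | h2
    · have hd : ∀ i'' : Fin 3, i'' ≠ 0 → mkP rk2 i'' = mkP rk3 i'' := by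
        intro i'' h
        fin_cases i''
        · exact absurd rfl h
        · rfl
        · rfl
      have hc := hsp (mkP rk3) v3 0 (mkP rk2) v2 hd
      rw [h3, h2] at hc
      revert hc
      decide
    · have hd : ∀ i'' : Fin 3, i'' ≠ 1 → mkP rk2 i'' = mkP rk1 i'' := by
        intro i'' h
        fin_cases i''
        · rfl
        · exact absurd rfl h
        · rfl
      have hc := hsp (mkP rk1) v1 1 (mkP rk2) v2 hd
      rw [h1, h2] at hc
      revert hc
      decide
end

section
/- There exists a matching market with three students whose student acquaintance graph is the complete graph on the three students (the cycle of length three), three schools each with quota one, in which no feasible matching is both Pareto efficient and locally envy-free; since the graph is complete, equivalently no feasible matching is both Pareto efficient and fair. -/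
/-- Rank function for the counterexample students' preferences (lower = better). -/
def rkI : Fin 3 → Option (Fin 3) → ℕ
  | 0, some 1 => 0 | 0, some 0 => 1 | 0, some 2 => 2 | 0, none => 3
  | _, some 0 => 0 | _, some 1 => 1 | _, some 2 => 2 | _, none => 3

/-- Rank function for the counterexample schools' preferences (lower = better). -/
def rkS : Fin 3 → Option (Fin 3) → ℕ
  | 0, some 0 => 0 | 0, some 2 => 1 | 0, some 1 => 2 | 0, none => 3
  | _, some 1 => 0 | _, some 0 => 1 | _, some 2 => 2 | _, none => 3

abbrev myPI : StudentPrefs (Fin 3) (Fin 3) := fun i a b => rkI i a < rkI i b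
abbrev myPS : SchoolPrefs (Fin 3) (Fin 3) := fun s a b => rkS s a < rkS s b

instance (μ' μ : Fin 3 → Option (Fin 3)) : Decidable (Dominates myPI μ' μ) :=
  inferInstanceAs (Decidable
    ((∀ i, μ' i = μ i ∨ myPI i (μ' i) (μ i)) ∧ ∃ i, myPI i (μ' i) (μ i)))

instance (μ : Fin 3 → Option (Fin 3)) (i i' : Fin 3) :
    Decidable (JEnvy myPI myPS μ i i') :=
  inferInstanceAs (Decidable
    (∃ s : Fin 3, μ i' = some s ∧ myPI i (some s) (μ i) ∧ myPS s (some i) (some i')))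

/-- A cheap decidable reformulation of feasibility for unit quotas. -/
abbrev FeasB (μ : Fin 3 → Option (Fin 3)) : Prop :=
  ∀ i j : Fin 3, i ≠ j → μ i = none ∨ μ i ≠ μ j

lemma feas_iff (μ : Fin 3 → Option (Fin 3)) :
    Feasible (fun _ => 1) μ ↔ FeasB μ := by
  constructor
  · intro hf i j hne
    by_contra hc
    push_neg at hc
    obtain ⟨h1, h2⟩ := hc
    obtain ⟨s, hs⟩ := Option.ne_none_iff_exists'.mp h1
    have hj : μ j = some s := h2 ▸ hs
    have hsub : ({i, j} : Set (Fin 3)) ⊆ {i' | μ i' = some s} := by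
      rintro x (rfl | rfl) <;> simpa [hs, hj]
    have h2' : ({i, j} : Set (Fin 3)).ncard = 2 := Set.ncard_pair hne
    have hle := Set.ncard_le_ncard hsub (Set.toFinite _)
    have hq : {i' | μ i' = some s}.ncard ≤ 1 := hf s
    rw [h2'] at hle
    omega
  · intro hb s
    rw [Set.ncard_le_one (Set.toFinite _)]
    intro a ha b hb'
    simp only [Set.mem_setOf_eq] at ha hb'
    by_contra hne
    rcases hb a b hne with h | h
    · simp [ha] at h
    · exact h (ha.trans hb'.symm)

lemma mu_eq (μ : Fin 3 → Option (Fin 3)) : μ = ![μ 0, μ 1, μ 2] := by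
  funext i; fin_cases i <;> rfl

lemma rank_strict_total {α : Type*} (r : α → ℕ) (hinj : Function.Injective r) :
    IsStrictTotalOrder α (fun a b => r a < r b) where
  trichotomous a b := by
    rcases lt_trichotomy (r a) (r b) with h | h | h
    · exact fun h1 _ => absurd h h1
    · exact fun _ _ => hinj h
    · exact fun _ h2 => absurd h h2
  irrefl a := lt_irrefl _
  trans a b c := lt_trans

lemma key : ¬ ∃ a b c : Option (Fin 3), FeasB ![a, b, c] ∧
    (∀ a' b' c' : Option (Fin 3), FeasB ![a', b', c'] →
      ¬ Dominates myPI ![a', b', c'] ![a, b, c]) ∧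
    (∀ i i' : Fin 3, ¬ JEnvy myPI myPS ![a, b, c] i i') := by
  decide

lemma no_good (μ : Fin 3 → Option (Fin 3)) (hfeas : Feasible (fun _ => 1) μ)
    (hpe : ParetoEfficient myPI (fun _ => 1) μ)
    (hfair : ∀ i i' : Fin 3, ¬ JEnvy myPI myPS μ i i') : False := by
  apply key
  refine ⟨μ 0, μ 1, μ 2, ?_, ?_, ?_⟩
  · rw [← mu_eq]; exact (feas_iff μ).mp hfeas
  · intro a' b' c' hf'
    rw [← mu_eq]
    exact hpe _ ((feas_iff _).mpr hf')
  · rw [← mu_eq]; exact hfair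

/-- there is a matching market on three students whose acquaintance graph is
the complete graph (the 3-cycle) and three schools of unit quota in which no feasible
matching is both Pareto efficient and locally envy-free; since the graph is complete,
equivalently no feasible matching is both Pareto efficient and fair. -/
theorem no_pe_lef_on_triangle :
    ∃ (pI : StudentPrefs (Fin 3) (Fin 3)) (pS : SchoolPrefs (Fin 3) (Fin 3)) (q : Fin 3 → ℕ),
      ValidStudentPrefs pI ∧ ValidSchoolPrefs pS ∧ (∀ s, q s = 1) ∧
      (¬ ∃ μ : Fin 3 → Option (Fin 3), Feasible q μ ∧ ParetoEfficient pI q μ ∧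
          LEF (⊤ : SimpleGraph (Fin 3)) pI pS μ) ∧
      (¬ ∃ μ : Fin 3 → Option (Fin 3), Feasible q μ ∧ ParetoEfficient pI q μ ∧
          Fair pI pS μ) := by
  refine ⟨myPI, myPS, fun _ => 1, ?_, ?_, fun _ => rfl, ?_, ?_⟩
  · intro i
    apply rank_strict_total
    fin_cases i <;> intro a b <;> fin_cases a <;> fin_cases b <;> decide
  · intro s
    apply rank_strict_total
    fin_cases s <;> intro a b <;> fin_cases a <;> fin_cases b <;> decide
  · rintro ⟨μ, hfeas, hpe, hlef⟩
    refine no_good μ hfeas hpe (fun i i' hj => ?_)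
    by_cases hne : i = i'
    · subst hne
      obtain ⟨s, hs, hlt, -⟩ := hj
      rw [hs] at hlt
      exact lt_irrefl _ hlt
    · exact hlef i i' ⟨hj, by simpa [SimpleGraph.top_adj] using hne⟩
  · rintro ⟨μ, hfeas, hpe, hfair⟩
    exact no_good μ hfeas hpe hfair
end

section
/- Let G be a finite tree on a set I and let ≻ be a strict linear order on I that is single-peaked on G. Then every i ∈ I is ranked within the top two of the set {i} ∪ N(i) under ≻; that is, at most one neighbor of i in G is preferred to i under ≻. -/
/-- under a strict linear order single-peaked on a tree, every vertex is ranked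
within the top two of itself and its neighbors: at most one neighbor is preferred to it. -/
theorem single_peaked_tree_top_two {I : Type*} [Fintype I]
    (G : SimpleGraph I) (hT : G.IsTree)
    (r : I → I → Prop) (hr : IsStrictTotalOrder I r)
    (hsp : SinglePeakedOn G r) :
    ∀ i : I, {i' | G.Adj i i' ∧ r i' i}.ncard ≤ 1 := by
  intro i
  haveI := hr
  rw [Set.ncard_le_one (Set.toFinite _)]
  rintro i₁ ⟨hadj₁, hr₁⟩ i₂ ⟨hadj₂, hr₂⟩
  by_contra hne
  set A : Set I := {j | r j i} with hAdef
  have hiA : i ∉ A := fun h => irrefl_of r i h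
  have h₁A : i₁ ∈ A := hr₁
  have h₂A : i₂ ∈ A := hr₂
  have hm1 : 1 ≤ A.ncard := by
    rw [Nat.one_le_iff_ne_zero, ← Nat.pos_iff_ne_zero, Set.ncard_pos A.toFinite]
    exact ⟨i₁, h₁A⟩
  have hm2 : A.ncard ≤ Nat.card I := by
    rw [← Set.ncard_univ]
    exact Set.ncard_le_ncard (Set.subset_univ A) Set.finite_univ
  have hA : topSet r A.ncard = A := by
    ext x
    simp only [topSet, Set.mem_setOf_eq]
    constructor
    · intro hx
      by_contra hxA
      have hsub : A ⊆ {j | r j x} := by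
        intro j hj
        rcases trichotomous_of r x i with h | h | h
        · exact absurd h hxA
        · exact h ▸ hj
        · exact _root_.trans_of r hj h
      exact absurd (Set.ncard_le_ncard hsub (Set.toFinite _)) (not_le.mpr hx)
    · intro hx
      refine Set.ncard_lt_ncard ?_ A.toFinite
      constructor
      · intro j hj
        exact _root_.trans_of r hj hx
      · intro hsub
        exact irrefl_of r x (hsub hx)
  have hconn := hsp A.ncard hm1 hm2
  rw [hA] at hconn
  classical
  obtain ⟨w⟩ := hconn.preconnected ⟨i₂, h₂A⟩ ⟨i₁, h₁A⟩
  -- path from i₂ to i₁ inside A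
  set f := SimpleGraph.Embedding.induce (G := G) A with hf
  set q : G.Walk i₂ i₁ := (w.toPath : (G.induce A).Path _ _).val.map f.toHom with hq
  have hqpath : q.IsPath :=
    SimpleGraph.Walk.map_isPath_of_injective f.injective (w.toPath).property
  have hqsupp : ∀ x ∈ q.support, x ∈ A := by
    intro x hx
    replace hx : x ∈ ((w.toPath : (G.induce A).Path _ _).val.support.map f.toHom) := by
      rw [← SimpleGraph.Walk.support_map]; exact hx
    rw [List.mem_map] at hx
    obtain ⟨⟨a, ha⟩, _, rfl⟩ := hx
    exact ha
  have hinotq : i ∉ q.support := fun h => hiA (hqsupp i h)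
  set p₂ : G.Walk i i₁ := SimpleGraph.Walk.cons hadj₂ q with hp₂
  have hp₂path : p₂.IsPath := by
    rw [hp₂, SimpleGraph.Walk.cons_isPath_iff]
    exact ⟨hqpath, hinotq⟩
  have heq := hT.IsAcyclic.path_unique (SimpleGraph.Path.singleton hadj₁) ⟨p₂, hp₂path⟩
  have hsupp := congrArg (fun p : G.Path i i₁ => p.val.support) heq
  simp only [SimpleGraph.Path.singleton, SimpleGraph.Walk.support_cons,
    SimpleGraph.Walk.support_nil, hp₂] at hsupp
  have hi₂ : i₂ ∈ i :: q.support :=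
    List.mem_cons_of_mem _ q.start_mem_support
  rw [← hsupp] at hi₂
  simp only [List.mem_cons, List.not_mem_nil, or_false] at hi₂
  rcases hi₂ with h | h
  · exact hadj₂.ne' h
  · exact hne h.symm
end

section
/- Consider a matching market in which every school has quota at least one, the student acquaintance graph G is a tree, and for every school s the restriction of ≻_s to I is single-peaked on G. Then there exists a feasible matching that is simultaneously Pareto efficient, locally envy-free, and mutually-best. -/
open SimpleGraph

section TreeAux

variable {V : Type*} {G : SimpleGraph V}

/-- A maximum exists for any "strict total order"-like relation on a nonempty finset. -/
lemma exists_rel_max {α : Type*} (r : α → α → Prop)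
    (htri : ∀ a b : α, a ≠ b → r a b ∨ r b a)
    (htrans : ∀ a b c : α, r a b → r b c → r a c) :
    ∀ (F : Finset α), F.Nonempty → ∃ m ∈ F, ∀ x ∈ F, x ≠ m → r m x := by
  classical
  intro F
  induction F using Finset.induction_on with
  | empty => rintro ⟨x, hx⟩; cases hx
  | @insert a F haF ih =>
    intro _
    rcases F.eq_empty_or_nonempty with rfl | hFne
    · exact ⟨a, by simp, by simp⟩
    · obtain ⟨m, hmF, hm⟩ := ih hFne
      have ham : a ≠ m := fun h => haF (h ▸ hmF)
      rcases htri a m ham with h | h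
      · refine ⟨a, Finset.mem_insert_self _ _, ?_⟩
        intro x hx hxa
        rcases Finset.mem_insert.mp hx with rfl | hxF
        · exact absurd rfl hxa
        · rcases eq_or_ne x m with rfl | hxm
          · exact h
          · exact htrans _ _ _ h (hm x hxF hxm)
      · refine ⟨m, Finset.mem_insert_of_mem hmF, ?_⟩
        intro x hx hxm
        rcases Finset.mem_insert.mp hx with rfl | hxF
        · exact h
        · exact hm x hxF hxm

/-- The unique path between two vertices of a tree. -/
noncomputable def treePath (hT : G.IsTree) (u v : V) : G.Walk u v :=
  (hT.existsUnique_path u v).exists.choose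

lemma treePath_isPath (hT : G.IsTree) (u v : V) : (treePath hT u v).IsPath :=
  (hT.existsUnique_path u v).exists.choose_spec

lemma treePath_unique (hT : G.IsTree) {u v : V} {p : G.Walk u v} (hp : p.IsPath) :
    p = treePath hT u v :=
  (hT.existsUnique_path u v).unique hp (treePath_isPath hT u v)

lemma treePath_self (hT : G.IsTree) (v : V) : treePath hT v v = Walk.nil :=
  (treePath_unique hT Walk.IsPath.nil).symm

lemma treePath_cons_of_adj_mem (hT : G.IsTree) {a x w : V}
    (hadj : G.Adj a x) (hx : x ∈ (treePath hT a w).support) :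
    treePath hT a w = Walk.cons hadj (treePath hT x w) := by
  classical
  set p := treePath hT a w with hp0
  have hp : p.IsPath := treePath_isPath hT a w
  have ht : (p.takeUntil x hx).IsPath := hp.takeUntil hx
  have hd : (p.dropUntil x hx).IsPath := hp.dropUntil hx
  have hedge : (Walk.cons hadj (Walk.nil : G.Walk x x)).IsPath := by
    rw [Walk.isPath_def, Walk.support_cons, Walk.support_nil]
    exact List.nodup_cons.mpr ⟨by simp [hadj.ne], List.nodup_singleton x⟩
  have h1 : (Walk.cons hadj (Walk.nil : G.Walk x x)) = p.takeUntil x hx :=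
    (hT.existsUnique_path a x).unique hedge ht
  have h2 : p.dropUntil x hx = treePath hT x w := treePath_unique hT hd
  calc p = (p.takeUntil x hx).append (p.dropUntil x hx) := (p.take_spec hx).symm
    _ = (Walk.cons hadj (Walk.nil : G.Walk x x)).append (treePath hT x w) := by
        rw [← h1, h2]
    _ = Walk.cons hadj (treePath hT x w) := by simp

lemma mem_treePath_of_not_mem (hT : G.IsTree) {a b w : V} (hadj : G.Adj a b)
    (hb : a ∉ (treePath hT b w).support) : b ∈ (treePath hT a w).support := by
  have hc : (Walk.cons hadj (treePath hT b w)).IsPath := by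
    rw [Walk.isPath_def, Walk.support_cons]
    exact List.nodup_cons.mpr ⟨hb, (Walk.isPath_def _).mp (treePath_isPath hT b w)⟩
  rw [← treePath_unique hT hc, Walk.support_cons]
  exact List.mem_cons_of_mem _ (Walk.start_mem_support _)

lemma adj_mem_treePath_unique (hT : G.IsTree) {a w x y : V} (hx : G.Adj x a) (hy : G.Adj y a)
    (hxs : x ∈ (treePath hT a w).support) (hys : y ∈ (treePath hT a w).support) : x = y := by
  have h1 := treePath_cons_of_adj_mem hT hx.symm hxs
  have h2 := treePath_cons_of_adj_mem hT hy.symm hys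
  have e1 : (treePath hT a w).support = a :: (treePath hT x w).support := by
    rw [h1, Walk.support_cons]
  have e2 : (treePath hT a w).support = a :: (treePath hT y w).support := by
    rw [h2, Walk.support_cons]
  have e3 : (treePath hT x w).support = (treePath hT y w).support :=
    List.cons_injective (e1.symm.trans e2)
  have hhx : (treePath hT x w).support.head? = some x := by
    rw [Walk.support_eq_cons]; rfl
  have hhy : (treePath hT y w).support.head? = some y := by
    rw [Walk.support_eq_cons]; rfl
  rw [e3, hhy] at hhx
  exact (Option.some_injective _ hhx).symm

end TreeAux
open SimpleGraph

section PairAux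
variable {V : Type*} {G : SimpleGraph V}

lemma pair_lemma [Fintype V] (hT : G.IsTree)
    (U : Finset V) (hU : U.Nonempty) (f : V → V)
    (hf : ∀ i ∈ U, f i ∈ U ∧ G.Adj (f i) i) :
    ∃ a ∈ U, f (f a) = a := by
  classical
  obtain ⟨i₀, hi₀⟩ := hU
  have horb0 : ∀ n : ℕ, f^[n] i₀ ∈ U := by
    intro n; induction n with
    | zero => exact hi₀
    | succ n ihn => rw [Function.iterate_succ_apply']; exact (hf _ ihn).1
  obtain ⟨m, k, hmk, heq⟩ := Finite.exists_ne_map_eq_of_infinite (fun n : ℕ => f^[n] i₀)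
  replace heq : f^[m] i₀ = f^[k] i₀ := heq
  have key : ∃ (c : V) (r : ℕ), (∀ n, f^[n] c ∈ U) ∧ 0 < r ∧ f^[r] c = c := by
    rcases hmk.lt_or_gt with h | h
    · refine ⟨f^[m] i₀, k - m, fun n => by rw [← Function.iterate_add_apply]; exact horb0 _,
        by omega, ?_⟩
      rw [← Function.iterate_add_apply, Nat.sub_add_cancel h.le]
      exact heq.symm
    · refine ⟨f^[k] i₀, m - k, fun n => by rw [← Function.iterate_add_apply]; exact horb0 _,
        by omega, ?_⟩
      rw [← Function.iterate_add_apply, Nat.sub_add_cancel h.le]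
      exact heq
  obtain ⟨c, r, horb, hr, hrc⟩ := key
  have hcU : c ∈ U := horb 0
  have hex : ∃ p : ℕ, 0 < p ∧ f^[p] c = c := ⟨r, hr, hrc⟩
  set p := Nat.find hex with hpdef
  obtain ⟨hppos, hpc⟩ : 0 < p ∧ f^[p] c = c := Nat.find_spec hex
  have hmin : ∀ e, e < p → ¬(0 < e ∧ f^[e] c = c) := fun e he => Nat.find_min hex he
  -- distinctness of f^[u] c for 1 ≤ u ≤ p ... up to the period
  have hdist : ∀ u v : ℕ, 1 ≤ u → u < v → v ≤ p → f^[u] c ≠ f^[v] c := by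
    intro u v hu huv hvp hequv
    have h1 : f^[p - v + u] c = c := by
      have : f^[p - v] (f^[v] c) = f^[p - v] (f^[u] c) := by rw [hequv]
      rw [← Function.iterate_add_apply, ← Function.iterate_add_apply,
        Nat.sub_add_cancel hvp] at this
      rw [← this, hpc]
    exact hmin (p - v + u) (by omega) ⟨by omega, h1⟩
  rcases Nat.lt_or_ge p 3 with hp3 | hp3
  · -- p = 1 or 2
    interval_cases p
    · -- p = 1 : f c = c, contradicts irreflexivity of adjacency
      exact absurd ((Function.iterate_one f ▸ hpc) ▸ (hf c hcU).2) G.irrefl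
    · -- p = 2 : our pair
      refine ⟨c, hcU, ?_⟩
      have : f^[2] c = f (f c) := by
        rw [show (2:ℕ) = 1 + 1 from rfl, Function.iterate_add_apply, Function.iterate_one]
      rw [← this, hpc]
  · -- p ≥ 3 : contradiction with acyclicity via two distinct paths
    exfalso
    have hwalk : ∀ n : ℕ, ∃ w : G.Walk (f^[n+1] c) (f c),
        w.support = ((List.range (n+1)).reverse).map (fun j => f^[j+1] c) := by
      intro n; induction n with
      | zero =>
        refine ⟨(Walk.nil : G.Walk (f c) (f c)).copy (by rw [Function.iterate_one]) rfl, ?_⟩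
        simp [Walk.support_copy, Function.iterate_one]
      | succ n ihn =>
        obtain ⟨w, hw⟩ := ihn
        have hadj : G.Adj (f^[n+1+1] c) (f^[n+1] c) := by
          rw [Function.iterate_succ_apply']
          exact (hf _ (horb (n+1))).2
        refine ⟨Walk.cons hadj w, ?_⟩
        have hrr : (List.range (n+1+1)).reverse = (n+1) :: (List.range (n+1)).reverse := by
          rw [List.range_succ, List.reverse_append, List.reverse_singleton,
            List.singleton_append]
        rw [Walk.support_cons, hw, hrr, List.map_cons]
    obtain ⟨w, hw⟩ := hwalk (p - 1)
    have hco : f^[p-1+1] c = c := by rw [show p - 1 + 1 = p by omega, hpc]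
    set W1 : G.Walk c (f c) := w.copy hco rfl with hW1
    have hW1supp : W1.support = ((List.range p).reverse).map (fun j => f^[j+1] c) := by
      rw [hW1, Walk.support_copy, hw, show p - 1 + 1 = p by omega]
    have hW1path : W1.IsPath := by
      rw [Walk.isPath_def, hW1supp]
      refine List.Nodup.map_on ?_ (List.nodup_reverse.mpr List.nodup_range)
      intro x hx y hy hxy
      rw [List.mem_reverse, List.mem_range] at hx hy
      by_contra hne
      rcases Nat.lt_or_ge x y with h | h
      · exact hdist (x+1) (y+1) (by omega) (by omega) (by omega) hxy
      · have h' : y < x := by omega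
        exact hdist (y+1) (x+1) (by omega) (by omega) (by omega) hxy.symm
    have hcfc : c ≠ f c := by
      intro h
      exact hmin 1 (by omega) ⟨one_pos, by rw [Function.iterate_one, ← h]⟩
    have hadj0 : G.Adj c (f c) := ((hf c hcU).2).symm
    set W2 : G.Walk c (f c) := Walk.cons hadj0 Walk.nil with hW2
    have hW2path : W2.IsPath := by
      rw [hW2, Walk.isPath_def, Walk.support_cons, Walk.support_nil]
      exact List.nodup_cons.mpr ⟨by simp [hcfc], List.nodup_singleton _⟩
    have hWeq : W1 = W2 := (hT.existsUnique_path c (f c)).unique hW1path hW2path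
    have hlen : W1.support.length = W2.support.length := by rw [hWeq]
    rw [hW1supp, hW2, Walk.support_cons, Walk.support_nil] at hlen
    simp at hlen
    omega

end PairAux
section CharAux
open SimpleGraph
variable {I S : Type*}

lemma char_lemma [Fintype I] {G : SimpleGraph I} (hT : G.IsTree)
    {pS : SchoolPrefs I S} (hpS : ValidSchoolPrefs pS) {s : S}
    (hsp : SinglePeakedOn G (fun i i' => pS s (some i) (some i')))
    {pk : I} (hpk : ∀ j : I, j ≠ pk → pS s (some pk) (some j))
    {i i' : I} (hadj : G.Adj i i') (hps : pS s (some i) (some i')) :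
    i ∈ (treePath hT i' pk).support := by
  classical
  haveI := hpS s
  by_contra hni
  have hmem : i' ∈ (treePath hT i pk).support := mem_treePath_of_not_mem hT hadj hni
  set r : I → I → Prop := fun a b => pS s (some a) (some b) with hr
  set B : Set I := {j | pS s (some j) (some i)} with hB
  set m : ℕ := B.ncard + 1 with hm
  have hm1 : 1 ≤ m := Nat.le_add_left 1 _
  have hiB : i ∉ B := fun h => irrefl_of (pS s) (some i) h
  have hmle : m ≤ Nat.card I := by
    have hss : B ⊂ Set.univ := by
      rw [Set.ssubset_univ_iff]
      intro h
      exact hiB (h ▸ Set.mem_univ i)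
    have := Set.ncard_lt_ncard hss (Set.finite_univ)
    rw [Set.ncard_univ] at this
    omega
  have hconn := hsp m hm1 hmle
  have hiT : i ∈ topSet r m := by
    show {j | r j i}.ncard < m
    exact Nat.lt_succ_self _
  have hpkT : pk ∈ topSet r m := by
    show {j | r j pk}.ncard < m
    have he : {j | r j pk} = ∅ := by
      ext j
      simp only [Set.mem_setOf_eq, Set.mem_empty_iff_false, iff_false]
      intro hj
      rcases eq_or_ne j pk with rfl | hne
      · exact irrefl_of (pS s) (some j) hj
      · exact irrefl_of (pS s) (some pk) (trans_of (pS s) (hpk j hne) hj)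
    rw [he, Set.ncard_empty]
    omega
  obtain ⟨W⟩ := hconn.preconnected ⟨i, hiT⟩ ⟨pk, hpkT⟩
  set W' : G.Walk i pk := W.map (SimpleGraph.Embedding.induce (topSet r m)).toHom with hW'
  have hWs : ∀ x ∈ W'.support, x ∈ topSet r m := by
    intro x hx
    replace hx : x ∈ (W.map (SimpleGraph.Embedding.induce (topSet r m)).toHom).support := hx
    rw [Walk.support_map] at hx
    obtain ⟨y, hy, hyx⟩ := List.mem_map.mp hx
    rw [← hyx]
    exact y.2
  have hpath : W'.bypass = treePath hT i pk := treePath_unique hT (Walk.bypass_isPath W')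
  have hi'T : i' ∈ topSet r m := by
    apply hWs
    apply Walk.support_bypass_subset
    rw [hpath]
    exact hmem
  -- counting contradiction
  have hsub : insert i B ⊆ {j | r j i'} := by
    rintro j hj
    rcases Set.mem_insert_iff.mp hj with rfl | hjB
    · exact hps
    · exact trans_of (pS s) hjB hps
  have hcard : m ≤ {j | r j i'}.ncard := by
    have h1 : (insert i B).ncard = m := by
      rw [Set.ncard_insert_of_notMem hiB (Set.toFinite B)]
    calc m = (insert i B).ncard := h1.symm
      _ ≤ _ := Set.ncard_le_ncard hsub (Set.toFinite _)
  have : {j | r j i'}.ncard < m := hi'T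
  omega

end CharAux
section CountAux
open scoped Classical
open SimpleGraph
variable {I S : Type*}

/-- The set of students in `P` matched to school `s`. -/
def cset (P : Finset I) (μ : I → Option S) (s : S) : Set I := {j | j ∈ P ∧ μ j = some s}

lemma cset_insert_update [DecidableEq I] {P : Finset I} {μ : I → Option S} {i : I}
    (hi : i ∉ P) (o : Option S) (s : S) :
    cset (insert i P) (Function.update μ i o) s
      = if o = some s then insert i (cset P μ s) else cset P μ s := by
  ext j
  rcases eq_or_ne j i with rfl | hj
  · by_cases ho : o = some s
    · simp [cset, Function.update_self, ho, hi]
    · simp [cset, Function.update_self, ho, hi]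
  · have hupd : Function.update μ i o j = μ j := Function.update_of_ne hj _ _
    by_cases ho : o = some s
    · simp [cset, hupd, ho, hj]
    · simp [cset, hupd, ho, hj]

lemma ncard_cset_insert_update [DecidableEq I] [Finite I] {P : Finset I} {μ : I → Option S}
    {i : I} (hi : i ∉ P) (o : Option S) (s : S) :
    (cset (insert i P) (Function.update μ i o) s).ncard
      = (cset P μ s).ncard + (if o = some s then 1 else 0) := by
  rw [cset_insert_update hi]
  by_cases ho : o = some s
  · rw [if_pos ho, if_pos ho,
      Set.ncard_insert_of_notMem (fun h => hi h.1) (Set.toFinite _)]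
  · rw [if_neg ho, if_neg ho, add_zero]

lemma count_contra [Finite I] {q : S → ℕ} {P : Finset I} {μ ν : I → Option S}
    (hν : Feasible q ν) (hνP : ∀ j ∈ P, ν j = μ j) {x : I} (hxP : x ∉ P) {s' : S}
    (hx : ν x = some s') (hge : q s' ≤ (cset P μ s').ncard) : False := by
  have hsub : insert x (cset P μ s') ⊆ {y | ν y = some s'} := by
    rintro y hy
    rcases Set.mem_insert_iff.mp hy with rfl | hyP
    · exact hx
    · show ν y = some s'
      rw [hνP y hyP.1]; exact hyP.2
  have h1 : (cset P μ s').ncard + 1 ≤ {y | ν y = some s'}.ncard := by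
    rw [← Set.ncard_insert_of_notMem (fun h => hxP h.1) (Set.toFinite _)]
    exact Set.ncard_le_ncard hsub (Set.toFinite _)
  have h2 := hν s'
  omega

end CountAux
section MainAux
open SimpleGraph
open scoped Classical
variable {I S : Type*}

lemma final_univ [Fintype I] [Fintype S] {G : SimpleGraph I} (hT : G.IsTree)
    {pI : StudentPrefs I S} {pS : SchoolPrefs I S} {q : S → ℕ}
    (hpI : ValidStudentPrefs pI) (hpS : ValidSchoolPrefs pS)
    (hsp : ∀ s : S, SinglePeakedOn G (fun i i' => pS s (some i) (some i')))
    (pk : S → I) (hpk : ∀ s, ∀ j : I, j ≠ pk s → pS s (some (pk s)) (some j))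
    (μ : I → Option S)
    (hfeas : ∀ s, (cset (Finset.univ : Finset I) μ s).ncard ≤ q s)
    (hL : ∀ i' : I, ∀ s : S, μ i' = some s →
        ∀ i : I, G.Adj i i' → i ∈ (treePath hT i' (pk s)).support →
          (μ i = some s ∨ pI i (μ i) (some s)))
    (hPE : ∀ ν : I → Option S, Feasible q ν →
        (∀ j : I, ν j = μ j ∨ pI j (ν j) (μ j)) → ∀ j : I, ν j = μ j)
    (hM : ∀ i s, MBPair pI pS i s → μ i = some s) :
    Feasible q μ ∧ ParetoEfficient pI q μ ∧ LEF G pI pS μ ∧ MutuallyBest pI pS μ := by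
  refine ⟨?_, ?_, ?_, ?_⟩
  · intro s
    have he : {i | μ i = some s} = cset (Finset.univ : Finset I) μ s := by
      ext j; simp [cset]
    rw [he]; exact hfeas s
  · rintro ν hν ⟨hw, i0, hstrict⟩
    haveI := hpI i0
    rw [hPE ν hν (fun j => hw j) i0] at hstrict
    exact irrefl_of (pI i0) _ hstrict
  · rintro i i' ⟨⟨s, hμ, hpref, hjust⟩, hadj⟩
    haveI := hpI i
    have hchar := char_lemma hT hpS (hsp s) (hpk s) hadj hjust
    rcases hL i' s hμ i hadj hchar with h | h
    · rw [h] at hpref; exact irrefl_of (pI i) _ hpref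
    · exact irrefl_of (pI i) _ (trans_of (pI i) hpref h)
  · intro i s h; exact hM i s h

lemma main_ind [Fintype I] [Fintype S] {G : SimpleGraph I} (hT : G.IsTree)
    {pI : StudentPrefs I S} {pS : SchoolPrefs I S} {q : S → ℕ}
    (hpI : ValidStudentPrefs pI) (hpS : ValidSchoolPrefs pS)
    (hsp : ∀ s : S, SinglePeakedOn G (fun i i' => pS s (some i) (some i')))
    (pk : S → I) (hpk : ∀ s, ∀ j : I, j ≠ pk s → pS s (some (pk s)) (some j))
    (n : ℕ) :
    ∀ (P : Finset I) (μ : I → Option S),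
      Pᶜ.card ≤ n →
      (∀ s, (cset P μ s).ncard ≤ q s) →
      (∀ j ∈ P, ∀ s : S, (cset P μ s).ncard < q s → (μ j = some s ∨ pI j (μ j) (some s))) →
      (∀ i' ∈ P, ∀ s : S, μ i' = some s →
          ∀ i : I, G.Adj i i' → i ∈ (treePath hT i' (pk s)).support →
            i ∈ P ∧ (μ i = some s ∨ pI i (μ i) (some s))) →
      (∀ ν : I → Option S, Feasible q ν →
          (∀ j ∈ P, ν j = μ j ∨ pI j (ν j) (μ j)) → ∀ j ∈ P, ν j = μ j) →
      (∀ i s, MBPair pI pS i s → i ∈ P ∧ μ i = some s) →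
      ∃ μ' : I → Option S, Feasible q μ' ∧ ParetoEfficient pI q μ' ∧
        LEF G pI pS μ' ∧ MutuallyBest pI pS μ' := by
  classical
  induction n with
  | zero =>
    intro P μ hcard hfeas hA hL hPE hM
    have hP : P = Finset.univ := (Finset.compl_eq_empty_iff P).mp
      (Finset.card_eq_zero.mp (Nat.le_zero.mp hcard))
    subst hP
    exact ⟨μ, final_univ hT hpI hpS hsp pk hpk μ hfeas
      (fun i' s hμ i hadj hmem => (hL i' (Finset.mem_univ _) s hμ i hadj hmem).2)
      (fun ν hν hw j => hPE ν hν (fun j' _ => hw j') j (Finset.mem_univ _))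
      (fun i s h => (hM i s h).2)⟩
  | succ n ih =>
    intro P μ hcard hfeas hA hL hPE hM
    by_cases hPu : P = Finset.univ
    · subst hPu
      exact ⟨μ, final_univ hT hpI hpS hsp pk hpk μ hfeas
        (fun i' s hμ i hadj hmem => (hL i' (Finset.mem_univ _) s hμ i hadj hmem).2)
        (fun ν hν hw j => hPE ν hν (fun j' _ => hw j') j (Finset.mem_univ _))
        (fun i s h => (hM i s h).2)⟩
    have hUne : Pᶜ.Nonempty := Finset.nonempty_iff_ne_empty.mpr
      (fun h => hPu ((Finset.compl_eq_empty_iff P).mp h))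
    have hUcard : 1 ≤ Pᶜ.card := Finset.card_pos.mpr hUne
    set C : Finset (Option S) :=
      insert none ((Finset.univ.filter (fun s => (cset P μ s).ncard < q s)).image some)
      with hC
    have hCne : C.Nonempty := ⟨none, Finset.mem_insert_self _ _⟩
    have hCnone : (none : Option S) ∈ C := Finset.mem_insert_self _ _
    have hCmem : ∀ s : S, some s ∈ C ↔ (cset P μ s).ncard < q s := by
      intro s; simp [hC]
    have ho : ∀ i : I, ∃ o ∈ C, ∀ x ∈ C, x ≠ o → pI i o x := by
      intro i
      haveI := hpI i
      refine exists_rel_max (pI i) ?_ (fun a b c h1 h2 => trans_of (pI i) h1 h2) C hCne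
      intro a b hab
      rcases trichotomous_of (pI i) a b with h | h | h
      · exact Or.inl h
      · exact absurd h hab
      · exact Or.inr h
    choose o hoC homax using ho
    have hOmax_contra : ∀ i : I, ∀ y ∈ C, pI i y (o i) → False := by
      intro i y hy h
      haveI := hpI i
      rcases eq_or_ne y (o i) with rfl | hne
      · exact irrefl_of (pI i) _ h
      · exact irrefl_of (pI i) _ (trans_of (pI i) h (homax i y hy hne))
    by_cases hvalid : ∃ i ∈ Pᶜ, (o i = none) ∨ (∃ s : S, o i = some s ∧
        ∀ i₀ : I, G.Adj i₀ i → i₀ ∈ (treePath hT i (pk s)).support → i₀ ∈ P)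
    · -- a "valid" student exists: process it alone
      obtain ⟨i, hiU, hvi⟩ := hvalid
      have hiP : i ∉ P := Finset.mem_compl.mp hiU
      set μ' := Function.update μ i (o i) with hμ'
      have hμ'P : ∀ j ∈ P, μ' j = μ j := by
        intro j hj
        apply Function.update_of_ne
        intro h; rw [h] at hj; exact hiP hj
      have hμ'i : μ' i = o i := Function.update_self _ _ _
      have hcnt : ∀ s, (cset (insert i P) μ' s).ncard
          = (cset P μ s).ncard + (if o i = some s then 1 else 0) :=
        fun s => ncard_cset_insert_update hiP (o i) s
      have hcntle : ∀ s, (cset P μ s).ncard ≤ (cset (insert i P) μ' s).ncard := by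
        intro s; rw [hcnt s]; omega
      refine ih (insert i P) μ' ?_ ?_ ?_ ?_ ?_ ?_
      · rw [Finset.compl_insert]
        have h1 := Finset.card_erase_of_mem hiU
        omega
      · intro s
        rw [hcnt s]
        by_cases hs : o i = some s
        · rw [if_pos hs]
          have := (hCmem s).mp (hs ▸ hoC i)
          omega
        · rw [if_neg hs, add_zero]; exact hfeas s
      · intro j hj s hlt
        have hav : (cset P μ s).ncard < q s := lt_of_le_of_lt (hcntle s) hlt
        rcases Finset.mem_insert.mp hj with h | hjP
        · rw [h, hμ'i]
          by_cases hs : o i = some s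
          · exact Or.inl hs
          · exact Or.inr (homax i (some s) ((hCmem s).mpr hav) (fun h => hs h.symm))
        · rw [hμ'P j hjP]
          exact hA j hjP s hav
      · intro i' hi' s hμi' i₀ hadj hmem
        rcases Finset.mem_insert.mp hi' with h | hi'P
        · rw [h] at hμi' hadj hmem
          rw [hμ'i] at hμi'
          rcases hvi with hnone | ⟨s₀, hs₀, hall⟩
          · rw [hnone] at hμi'; cases hμi'
          · have hss : s₀ = s := by
              rw [hs₀] at hμi'; exact Option.some_injective _ hμi'
            subst hss
            have hi₀P : i₀ ∈ P := hall i₀ hadj hmem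
            have hav : (cset P μ s₀).ncard < q s₀ := (hCmem s₀).mp (hs₀ ▸ hoC i)
            refine ⟨Finset.mem_insert_of_mem hi₀P, ?_⟩
            rw [hμ'P i₀ hi₀P]
            exact hA i₀ hi₀P s₀ hav
        · obtain ⟨h1, h2⟩ := hL i' hi'P s (by rw [← hμ'P i' hi'P]; exact hμi') i₀ hadj hmem
          exact ⟨Finset.mem_insert_of_mem h1, by rw [hμ'P i₀ h1]; exact h2⟩
      · intro ν hν hw
        have hνP : ∀ j ∈ P, ν j = μ j := hPE ν hν (fun j hj => by
          rw [← hμ'P j hj]; exact hw j (Finset.mem_insert_of_mem hj))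
        intro j hj
        rcases Finset.mem_insert.mp hj with h | hjP
        · rw [h, hμ'i]
          rcases hw i (Finset.mem_insert_self _ _) with h | h
          · rw [hμ'i] at h; exact h
          · exfalso
            rw [hμ'i] at h
            cases hνj : ν i with
            | none => rw [hνj] at h; exact hOmax_contra i none hCnone h
            | some s' =>
              rw [hνj] at h
              by_cases hav : (cset P μ s').ncard < q s'
              · exact hOmax_contra i (some s') ((hCmem s').mpr hav) h
              · exact count_contra hν hνP hiP hνj (by omega)
        · rw [hμ'P j hjP]; exact hνP j hjP
      · intro i₁ s h
        obtain ⟨h1, h2⟩ := hM i₁ s h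
        exact ⟨Finset.mem_insert_of_mem h1, by rw [hμ'P i₁ h1]; exact h2⟩
    · -- deadlock: find a mutually pointing adjacent pair and process both
      push_neg at hvalid
      obtain ⟨i₁, hi₁U⟩ := hUne
      obtain ⟨t₁, ht₁⟩ := Option.ne_none_iff_exists'.mp (hvalid i₁ hi₁U).1
      set sfun : I → S := fun j => (o j).getD t₁ with hsfun
      have hsf : ∀ j ∈ Pᶜ, o j = some (sfun j) := by
        intro j hj
        obtain ⟨t, ht⟩ := Option.ne_none_iff_exists'.mp (hvalid j hj).1
        rw [hsfun]
        simp only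
        rw [ht]
        rfl
      have hfex : ∀ j : I, ∃ x : I, j ∈ Pᶜ →
          x ∈ Pᶜ ∧ G.Adj x j ∧ x ∈ (treePath hT j (pk (sfun j))).support := by
        intro j
        by_cases hj : j ∈ Pᶜ
        · obtain ⟨x, hx1, hx2, hx3⟩ := (hvalid j hj).2 (sfun j) (hsf j hj)
          exact ⟨x, fun _ => ⟨Finset.mem_compl.mpr hx3, hx1, hx2⟩⟩
        · exact ⟨j, fun h => absurd h hj⟩
      choose f hfspec using hfex
      obtain ⟨a, haU, hffa⟩ := pair_lemma hT Pᶜ ⟨i₁, hi₁U⟩ f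
        (fun i hi => ⟨(hfspec i hi).1, (hfspec i hi).2.1⟩)
      set b := f a with hbdef
      obtain ⟨hbU, hadjba, hbsupp⟩ := hfspec a haU
      have haspec := hfspec b hbU
      rw [hffa] at haspec
      obtain ⟨haU2, hadjab, hasupp⟩ := haspec
      set sa := sfun a with hsadef
      set sb := sfun b with hsbdef
      have hoa : o a = some sa := hsf a haU
      have hob : o b = some sb := hsf b hbU
      have haP : a ∉ P := Finset.mem_compl.mp haU
      have hbP : b ∉ P := Finset.mem_compl.mp hbU
      have hne_ab : a ≠ b := fun h => G.irrefl (h ▸ hadjab)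
      have hsa_av : (cset P μ sa).ncard < q sa := (hCmem sa).mp (hoa ▸ hoC a)
      have hsb_av : (cset P μ sb).ncard < q sb := (hCmem sb).mp (hob ▸ hoC b)
      have hsasb : sa ≠ sb := by
        intro he
        have h1 := treePath_cons_of_adj_mem hT hadjab hbsupp
        have hnd := (Walk.isPath_def _).mp (treePath_isPath hT a (pk sa))
        rw [h1, Walk.support_cons] at hnd
        have hamem : a ∈ (treePath hT b (pk sa)).support := by
          rw [he]; exact hasupp
        exact (List.nodup_cons.mp hnd).1 hamem
      have hpab : pI a (some sa) (some sb) := by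
        have h := homax a (some sb) ((hCmem sb).mpr hsb_av)
          (by rw [hoa]; exact fun h => hsasb (Option.some_injective _ h).symm)
        rwa [hoa] at h
      have hpba : pI b (some sb) (some sa) := by
        have h := homax b (some sa) ((hCmem sa).mpr hsa_av)
          (by rw [hob]; exact fun h => hsasb (Option.some_injective _ h))
        rwa [hob] at h
      set μ₁ := Function.update μ a (some sa) with hμ₁
      set μ₂ := Function.update μ₁ b (some sb) with hμ₂
      have hμ₂a : μ₂ a = some sa := by
        rw [hμ₂, Function.update_of_ne hne_ab, hμ₁, Function.update_self]
      have hμ₂b : μ₂ b = some sb := Function.update_self _ _ _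
      have hμ₂P : ∀ j ∈ P, μ₂ j = μ j := by
        intro j hj
        have hjb : j ≠ b := by intro h; rw [h] at hj; exact hbP hj
        have hja : j ≠ a := by intro h; rw [h] at hj; exact haP hj
        rw [hμ₂, Function.update_of_ne hjb, hμ₁, Function.update_of_ne hja]
      have hbPa : b ∉ insert a P := by
        rw [Finset.mem_insert]
        rintro (h | h)
        · exact hne_ab h.symm
        · exact hbP h
      have hcnt1 : ∀ s, (cset (insert a P) μ₁ s).ncard
          = (cset P μ s).ncard + (if (some sa : Option S) = some s then 1 else 0) :=
        fun s => ncard_cset_insert_update haP _ s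
      have hcnt2 : ∀ s, (cset (insert b (insert a P)) μ₂ s).ncard
          = (cset (insert a P) μ₁ s).ncard
            + (if (some sb : Option S) = some s then 1 else 0) :=
        fun s => ncard_cset_insert_update hbPa _ s
      refine ih (insert b (insert a P)) μ₂ ?_ ?_ ?_ ?_ ?_ ?_
      · rw [Finset.compl_insert, Finset.compl_insert]
        have h2 : b ∈ Pᶜ.erase a := Finset.mem_erase.mpr ⟨fun h => hne_ab h.symm, hbU⟩
        rw [Finset.card_erase_of_mem h2, Finset.card_erase_of_mem haU]
        omega
      · intro s
        rw [hcnt2 s, hcnt1 s]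
        by_cases h1 : (some sa : Option S) = some s
        · have hs : sa = s := Option.some_injective _ h1
          have h2 : ¬((some sb : Option S) = some s) :=
            fun h => hsasb (hs.trans (Option.some_injective _ h).symm)
          rw [if_pos h1, if_neg h2, add_zero]
          rw [hs] at hsa_av
          omega
        · rw [if_neg h1]
          by_cases h2 : (some sb : Option S) = some s
          · rw [if_pos h2]
            have hs : sb = s := Option.some_injective _ h2
            rw [hs] at hsb_av
            omega
          · rw [if_neg h2, add_zero, add_zero]
            exact hfeas s
      · intro j hj s hlt
        have hle : (cset P μ s).ncard ≤ (cset (insert b (insert a P)) μ₂ s).ncard := by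
          rw [hcnt2 s, hcnt1 s]; omega
        have hav : (cset P μ s).ncard < q s := lt_of_le_of_lt hle hlt
        rcases Finset.mem_insert.mp hj with h | h
        · subst h
          rw [hμ₂b]
          by_cases hs : (some sb : Option S) = some s
          · exact Or.inl hs
          · right
            have hmx := homax b (some s) ((hCmem s).mpr hav)
              (by rw [hob]; exact fun hh => hs hh.symm)
            rwa [hob] at hmx
        · rcases Finset.mem_insert.mp h with h' | hjP
          · rw [h', hμ₂a]
            by_cases hs : (some sa : Option S) = some s
            · exact Or.inl hs
            · right
              have hmx := homax a (some s) ((hCmem s).mpr hav)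
                (by rw [hoa]; exact fun hh => hs hh.symm)
              rwa [hoa] at hmx
          · rw [hμ₂P j hjP]
            exact hA j hjP s hav
      · intro i' hi' s hμi' i₀ hadj hmem
        rcases Finset.mem_insert.mp hi' with h | h
        · subst h
          rw [hμ₂b] at hμi'
          have hs : sb = s := Option.some_injective _ hμi'
          subst hs
          have hi₀a : i₀ = a := adj_mem_treePath_unique hT hadj hadjab hmem hasupp
          subst hi₀a
          refine ⟨Finset.mem_insert_of_mem (Finset.mem_insert_self _ _), ?_⟩
          rw [hμ₂a]
          exact Or.inr hpab
        · rcases Finset.mem_insert.mp h with h' | hi'P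
          · rw [h'] at hμi' hadj hmem
            rw [hμ₂a] at hμi'
            have hs : sa = s := Option.some_injective _ hμi'
            subst hs
            have hi₀b : i₀ = b := adj_mem_treePath_unique hT hadj hadjba hmem hbsupp
            subst hi₀b
            refine ⟨Finset.mem_insert_self _ _, ?_⟩
            rw [hμ₂b]
            exact Or.inr hpba
          · obtain ⟨h1, h2⟩ := hL i' hi'P s (by rw [← hμ₂P i' hi'P]; exact hμi') i₀ hadj hmem
            exact ⟨Finset.mem_insert_of_mem (Finset.mem_insert_of_mem h1),
              by rw [hμ₂P i₀ h1]; exact h2⟩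
      · intro ν hν hw
        have hνP : ∀ j ∈ P, ν j = μ j := hPE ν hν (fun j hj => by
          rw [← hμ₂P j hj]
          exact hw j (Finset.mem_insert_of_mem (Finset.mem_insert_of_mem hj)))
        have hνa : ν a = some sa := by
          rcases hw a (Finset.mem_insert_of_mem (Finset.mem_insert_self _ _)) with h | h
          · rw [hμ₂a] at h; exact h
          · exfalso
            rw [hμ₂a] at h
            cases hνj : ν a with
            | none =>
              rw [hνj] at h
              exact hOmax_contra a none hCnone (by rw [hoa]; exact h)
            | some s' =>
              rw [hνj] at h
              by_cases hav : (cset P μ s').ncard < q s'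
              · exact hOmax_contra a (some s') ((hCmem s').mpr hav) (by rw [hoa]; exact h)
              · exact count_contra hν hνP haP hνj (by omega)
        have hνb : ν b = some sb := by
          rcases hw b (Finset.mem_insert_self _ _) with h | h
          · rw [hμ₂b] at h; exact h
          · exfalso
            rw [hμ₂b] at h
            cases hνj : ν b with
            | none =>
              rw [hνj] at h
              exact hOmax_contra b none hCnone (by rw [hob]; exact h)
            | some s' =>
              rw [hνj] at h
              by_cases hav : (cset P μ s').ncard < q s'
              · exact hOmax_contra b (some s') ((hCmem s').mpr hav) (by rw [hob]; exact h)
              · exact count_contra hν hνP hbP hνj (by omega)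
        intro j hj
        rcases Finset.mem_insert.mp hj with h | h
        · subst h; rw [hμ₂b]; exact hνb
        · rcases Finset.mem_insert.mp h with h' | hjP
          · rw [h', hμ₂a]; exact hνa
          · rw [hμ₂P j hjP]; exact hνP j hjP
      · intro i₂ s h
        obtain ⟨h1, h2⟩ := hM i₂ s h
        exact ⟨Finset.mem_insert_of_mem (Finset.mem_insert_of_mem h1),
          by rw [hμ₂P i₂ h1]; exact h2⟩

end MainAux
/-- if the acquaintance graph is a tree, every school has quota at least one,
and each school's preference restricted to students is single-peaked on the tree, then a
feasible matching exists that is Pareto efficient, locally envy-free, and mutually-best. -/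
theorem pe_lef_mb_exists_on_tree {I S : Type*} [Fintype I] [Fintype S] [Nonempty I]
    (G : SimpleGraph I) (hT : G.IsTree)
    (pI : StudentPrefs I S) (pS : SchoolPrefs I S) (q : S → ℕ)
    (hpI : ValidStudentPrefs pI) (hpS : ValidSchoolPrefs pS)
    (hq : ∀ s, 1 ≤ q s)
    (hsp : ∀ s : S, SinglePeakedOn G (fun i i' => pS s (some i) (some i'))) :
    ∃ μ : I → Option S, Feasible q μ ∧ ParetoEfficient pI q μ ∧
      LEF G pI pS μ ∧ MutuallyBest pI pS μ := by
  classical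
  have hpkex : ∀ s : S, ∃ p : I, ∀ j : I, j ≠ p → pS s (some p) (some j) := by
    intro s
    haveI := hpS s
    obtain ⟨m, -, hm⟩ := exists_rel_max (fun a b : I => pS s (some a) (some b))
      (fun a b hab => by
        rcases trichotomous_of (pS s) (some a) (some b) with h | h | h
        · exact Or.inl h
        · exact absurd (Option.some_injective _ h) hab
        · exact Or.inr h)
      (fun a b c h1 h2 => trans_of (pS s) h1 h2) Finset.univ Finset.univ_nonempty
    exact ⟨m, fun j hj => hm j (Finset.mem_univ j) hj⟩
  choose pk hpk using hpkex
  have hMBs : ∀ i s s', MBPair pI pS i s → MBPair pI pS i s' → s = s' := by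
    intro i s s' h h'
    by_contra hne
    haveI := hpI i
    have h1 := h.1 (some s') (fun he => hne (Option.some_injective _ he).symm)
    have h2 := h'.1 (some s) (fun he => hne (Option.some_injective _ he))
    exact irrefl_of (pI i) _ (trans_of (pI i) h1 h2)
  have hMBi : ∀ i i' s, MBPair pI pS i s → MBPair pI pS i' s → i = i' := by
    intro i i' s h h'
    by_contra hne
    haveI := hpS s
    have h1 := h.2 (some i') (fun he => hne (Option.some_injective _ he).symm)
    have h2 := h'.2 (some i) (fun he => hne (Option.some_injective _ he))
    exact irrefl_of (pS s) _ (trans_of (pS s) h1 h2)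
  set μ₀ : I → Option S :=
    fun i => if h : ∃ s, MBPair pI pS i s then some h.choose else none with hμ₀def
  set P₀ : Finset I := Finset.univ.filter (fun i => ∃ s, MBPair pI pS i s) with hP₀def
  have hμ₀ : ∀ i s, MBPair pI pS i s → μ₀ i = some s := by
    intro i s h
    have hex : ∃ s, MBPair pI pS i s := ⟨s, h⟩
    rw [hμ₀def]
    simp only
    rw [dif_pos hex]
    exact congrArg some (hMBs i _ s hex.choose_spec h)
  have hμ₀inv : ∀ i s, μ₀ i = some s → MBPair pI pS i s := by
    intro i s h
    rw [hμ₀def] at h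
    simp only at h
    by_cases he : ∃ s, MBPair pI pS i s
    · rw [dif_pos he] at h
      have hs := he.choose_spec
      rwa [Option.some_injective _ h] at hs
    · rw [dif_neg he] at h; cases h
  have hP₀mem : ∀ i, i ∈ P₀ ↔ ∃ s, MBPair pI pS i s := by intro i; simp [hP₀def]
  have hfeas₀ : ∀ s, (cset P₀ μ₀ s).ncard ≤ q s := by
    intro s
    by_cases hex : ∃ i, μ₀ i = some s
    · obtain ⟨i0, hi0⟩ := hex
      have hsub : cset P₀ μ₀ s ⊆ {i0} := by
        intro j hj
        have := hMBi j i0 s (hμ₀inv j s hj.2) (hμ₀inv i0 s hi0)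
        simp [this]
      calc (cset P₀ μ₀ s).ncard ≤ ({i0} : Set I).ncard :=
            Set.ncard_le_ncard hsub (Set.toFinite _)
        _ = 1 := Set.ncard_singleton i0
        _ ≤ q s := hq s
    · have he : cset P₀ μ₀ s = ∅ := by
        ext j
        simp only [cset, Set.mem_setOf_eq, Set.mem_empty_iff_false, iff_false]
        rintro ⟨-, hj⟩
        exact hex ⟨j, hj⟩
      rw [he, Set.ncard_empty]
      omega
  have hA₀ : ∀ j ∈ P₀, ∀ s : S, (cset P₀ μ₀ s).ncard < q s →
      (μ₀ j = some s ∨ pI j (μ₀ j) (some s)) := by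
    intro j hj s _
    obtain ⟨s', hs'⟩ := (hP₀mem j).mp hj
    rw [hμ₀ j s' hs']
    by_cases he : s' = s
    · exact Or.inl (by rw [he])
    · exact Or.inr (hs'.1 (some s) (fun h => he (Option.some_injective _ h).symm))
  have hL₀ : ∀ i' ∈ P₀, ∀ s : S, μ₀ i' = some s →
      ∀ i : I, G.Adj i i' → i ∈ (treePath hT i' (pk s)).support →
        i ∈ P₀ ∧ (μ₀ i = some s ∨ pI i (μ₀ i) (some s)) := by
    intro i' _ s hμi' i hadj hmem
    have hmb := hμ₀inv i' s hμi'
    have hpki' : pk s = i' := by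
      by_contra hne
      haveI := hpS s
      have h1 := hpk s i' (fun h => hne h.symm)
      have h2 := hmb.2 (some (pk s)) (fun h => hne (Option.some_injective _ h))
      exact irrefl_of (pS s) _ (trans_of (pS s) h1 h2)
    exfalso
    rw [hpki', treePath_self hT i', Walk.support_nil] at hmem
    have hii : i = i' := by simpa using hmem
    exact G.irrefl (hii ▸ hadj)
  have hPE₀ : ∀ ν : I → Option S, Feasible q ν →
      (∀ j ∈ P₀, ν j = μ₀ j ∨ pI j (ν j) (μ₀ j)) → ∀ j ∈ P₀, ν j = μ₀ j := by
    intro ν _ hw j hj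
    obtain ⟨s', hs'⟩ := (hP₀mem j).mp hj
    rcases hw j hj with h | h
    · exact h
    · haveI := hpI j
      rw [hμ₀ j s' hs'] at h ⊢
      by_cases he : ν j = some s'
      · exact he
      · exact absurd (trans_of (pI j) (hs'.1 (ν j) he) h) (irrefl_of (pI j) _)
  have hM₀ : ∀ i s, MBPair pI pS i s → i ∈ P₀ ∧ μ₀ i = some s :=
    fun i s h => ⟨(hP₀mem i).mpr ⟨s, h⟩, hμ₀ i s h⟩
  exact main_ind hT hpI hpS hsp pk hpk P₀ᶜ.card P₀ μ₀ le_rfl hfeas₀ hA₀ hL₀ hPE₀ hM₀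
end

section
/- Let k ≥ 1, let the student acquaintance graph G = (I, E) contain a spanning tree T such that every vertex of G is incident to at most k − 1 edges of E not belonging to T, and suppose that for every school s the restriction of ≻_s to I is single-peaked on T. Then there exists a feasible matching that is Pareto efficient, locally EF-(k−1) with respect to G, and locally ERF-(k−1) with respect to G. -/
section ProofAux
section TreeAux
variable {I : Type*} {T : SimpleGraph I}

noncomputable def pathTo (hT : T.IsTree) (ρ v : I) : T.Walk ρ v :=
  (hT.existsUnique_path ρ v).exists.choose

lemma pathTo_isPath (hT : T.IsTree) (ρ v : I) : (pathTo hT ρ v).IsPath :=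
  (hT.existsUnique_path ρ v).exists.choose_spec

lemma pathTo_unique (hT : T.IsTree) {ρ v : I} (p : T.Walk ρ v) (hp : p.IsPath) :
    p = pathTo hT ρ v := by
  obtain ⟨q, hq, huniq⟩ := hT.existsUnique_path ρ v
  rw [huniq p hp, huniq _ (pathTo_isPath hT ρ v)]

noncomputable def par (hT : T.IsTree) (ρ v : I) : I :=
  (pathTo hT ρ v).reverse.getVert 1

lemma par_concat_aux (hT : T.IsTree) {ρ x y : I} (p : T.Walk ρ x) (h : T.Adj x y)
    (heq : p.concat h = pathTo hT ρ y) : par hT ρ y = x := by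
  rw [par, ← heq, SimpleGraph.Walk.reverse_concat]
  exact (SimpleGraph.Walk.getVert_cons_succ (n := 0) _ _).trans (SimpleGraph.Walk.getVert_zero _)

lemma par_root (hT : T.IsTree) (ρ : I) : par hT ρ ρ = ρ := by
  have h : (SimpleGraph.Walk.nil : T.Walk ρ ρ) = pathTo hT ρ ρ :=
    pathTo_unique hT _ SimpleGraph.Walk.IsPath.nil
  rw [par, ← h]
  simp [SimpleGraph.Walk.getVert_of_length_le]

lemma par_orient [DecidableEq I] (hT : T.IsTree) (ρ : I) {x y : I} (hxy : T.Adj x y) :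
    par hT ρ y = x ∨ par hT ρ x = y := by
  by_cases hy : y ∈ (pathTo hT ρ x).support
  · right
    have hq2 : ((pathTo hT ρ x).dropUntil y hy).IsPath :=
      (pathTo_isPath hT ρ x).dropUntil hy
    have hsingle : (SimpleGraph.Walk.cons hxy.symm SimpleGraph.Walk.nil : T.Walk y x).IsPath := by
      simp [SimpleGraph.Walk.isPath_def, hxy.ne']
    have hdrop : (pathTo hT ρ x).dropUntil y hy
        = SimpleGraph.Walk.cons hxy.symm SimpleGraph.Walk.nil :=
      (hT.existsUnique_path y x).unique hq2 hsingle
    have hspec := (pathTo hT ρ x).take_spec hy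
    rw [hdrop] at hspec
    have hcat : ((pathTo hT ρ x).takeUntil y hy).concat hxy.symm = pathTo hT ρ x := by
      rw [SimpleGraph.Walk.concat_eq_append]; exact hspec
    exact par_concat_aux hT _ hxy.symm hcat
  · left
    have hW : ((pathTo hT ρ x).concat hxy).IsPath := by
      have hnd := (pathTo_isPath hT ρ x).support_nodup
      simp [SimpleGraph.Walk.isPath_def, SimpleGraph.Walk.support_concat,
        List.concat_eq_append, List.nodup_append, hnd, hy]
      exact fun a ha hay => hy (hay ▸ ha)
    exact par_concat_aux hT _ hxy (pathTo_unique hT _ hW)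

end TreeAux


variable {I : Type*}

lemma myExistsMax {α : Type*} (r : α → α → Prop) (hr : IsStrictTotalOrder α r)
    (F : Finset α) (hF : F.Nonempty) : ∃ m ∈ F, ∀ x ∈ F, x ≠ m → r m x := by
  classical
  letI := hr
  revert hF
  induction F using Finset.induction with
  | empty => intro h; exact absurd h (by simp)
  | @insert a F' ha ih =>
    intro _
    by_cases hF' : F'.Nonempty
    · obtain ⟨m, hm, hmax⟩ := ih hF'
      rcases trichotomous_of r a m with h | h | h
      · refine ⟨a, Finset.mem_insert_self _ _, ?_⟩
        intro x hx hxa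
        rcases Finset.mem_insert.mp hx with rfl | hx'
        · exact absurd rfl hxa
        · by_cases hxm : x = m
          · subst hxm; exact h
          · exact trans_of r h (hmax x hx' hxm)
      · exact absurd (h ▸ hm) ha
      · refine ⟨m, Finset.mem_insert_of_mem hm, ?_⟩
        intro x hx hxm
        rcases Finset.mem_insert.mp hx with rfl | hx'
        · exact h
        · exact hmax x hx' hxm
    · rw [Finset.not_nonempty_iff_eq_empty] at hF'
      subst hF'
      refine ⟨a, by simp, ?_⟩
      intro x hx hxa
      simp at hx
      exact absurd hx hxa

lemma spStar [Finite I] [DecidableEq I] (T : SimpleGraph I) (hT : T.IsTree)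
    (r : I → I → Prop) (hirr : ∀ x, ¬ r x x) (htr : ∀ a b c, r a b → r b c → r a c)
    (hsp : SinglePeakedOn T r)
    {v u w : I} (hvu : T.Adj v u) (hvw : T.Adj v w)
    (hu : r u v) (hw : r w v) : u = w := by
  by_contra hne
  set m : ℕ := {j | r j v}.ncard with hm
  have hsubU : {j | r j u} ⊂ {j | r j v} := by
    rw [Set.ssubset_iff_subset_ne]
    constructor
    · intro j hj; exact htr _ _ _ hj hu
    · intro hEq
      have : u ∈ {j | r j u} := hEq ▸ hu
      exact hirr u this
  have hsubW : {j | r j w} ⊂ {j | r j v} := by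
    rw [Set.ssubset_iff_subset_ne]
    constructor
    · intro j hj; exact htr _ _ _ hj hw
    · intro hEq
      have : w ∈ {j | r j w} := hEq ▸ hw
      exact hirr w this
  have huT : u ∈ topSet r m := Set.ncard_lt_ncard hsubU (Set.toFinite _)
  have hwT : w ∈ topSet r m := Set.ncard_lt_ncard hsubW (Set.toFinite _)
  have hvT : v ∉ topSet r m := by simp [topSet, hm]
  have h1m : 1 ≤ m := by
    have : ({j | r j v}).Nonempty := ⟨u, hu⟩
    have := (Set.ncard_pos (Set.toFinite _)).mpr this
    omega
  have hmI : m ≤ Nat.card I := by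
    rw [← Set.ncard_univ]
    exact Set.ncard_le_ncard (Set.subset_univ _) (Set.toFinite _)
  have hconn := hsp m h1m hmI
  obtain ⟨W0⟩ := hconn.preconnected ⟨u, huT⟩ ⟨w, hwT⟩
  let f : T.induce (topSet r m) →g T := ⟨Subtype.val, fun {a b} hab => hab⟩
  have hfval : ∀ z : topSet r m, f z = z.val := fun _ => rfl
  let W : T.Walk u w := W0.map f
  have hvsup : v ∉ W.support := by
    intro hv
    rw [SimpleGraph.Walk.support_map] at hv
    obtain ⟨z, hz, hzv⟩ := List.mem_map.mp hv
    exact hvT (hzv ▸ z.property)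
  have hP := SimpleGraph.Walk.support_toPath_subset W
  have hP2 : (SimpleGraph.Walk.cons hvu.symm
      (SimpleGraph.Walk.cons hvw SimpleGraph.Walk.nil) : T.Walk u w).IsPath := by
    simp [SimpleGraph.Walk.isPath_def, hvu.ne', hvw.ne, hne]
  have hEq := (hT.existsUnique_path u w).unique (W.toPath).property hP2
  have : v ∈ (W.toPath : T.Walk u w).support := by
    rw [hEq]; simp
  exact hvsup (hP this)



section ExistsGood
variable {I S : Type*}

lemma existsGood [DecidableEq I] (T : SimpleGraph I) (hT : T.IsTree)
    (pS : S → Option I → Option I → Prop)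
    (R : Finset I) (hR : R.Nonempty) (best : I → Option S) :
    ∃ v ∈ R,
      (∀ s, best v = some s → ∀ u ∈ R, T.Adj v u → ¬ pS s (some u) (some v)) ∨
      (∃ p ∈ R, ∃ s s', best v = some s ∧ best p = some s' ∧ T.Adj v p ∧
        pS s (some p) (some v) ∧ pS s' (some v) (some p)) := by
  by_contra hcon
  push_neg at hcon
  have hA : ∀ v, v ∈ R → ∃ s, best v = some s ∧ ∃ u, u ∈ R ∧ T.Adj v u ∧ pS s (some u) (some v) := by
    intro v hv
    have h1 := (hcon v hv).1
    obtain ⟨s, hs, u, hu, hadj, hps⟩ := h1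
    exact ⟨s, hs, u, hu, hadj, hps⟩
  choose sv hsv bv hbvR hbvadj hbvps using hA
  have hnomut : ∀ v (hv : v ∈ R), bv (bv v hv) (hbvR v hv) ≠ v := by
    intro v hv heq
    have h2 := (hcon v hv).2
    have hx := hbvps (bv v hv) (hbvR v hv)
    rw [heq] at hx
    exact h2 (bv v hv) (hbvR v hv) (sv v hv) (sv (bv v hv) (hbvR v hv))
      (hsv v hv) (hsv (bv v hv) (hbvR v hv)) (hbvadj v hv) (hbvps v hv) hx
  obtain ⟨ρ, hρ⟩ := hR
  classical
  let f : I → I := fun v => if h : v ∈ R then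
      (if par hT ρ (bv v h) = v then bv v h else v) else v
  have hmaps : ∀ v ∈ R, f v ∈ R.erase ρ := by
    intro v hv
    have hadj := hbvadj v hv
    rw [Finset.mem_erase]
    simp only [f, dif_pos hv]
    by_cases hc : par hT ρ (bv v hv) = v
    · rw [if_pos hc]
      refine ⟨?_, hbvR v hv⟩
      intro hbvρ
      have hc' := hc
      rw [hbvρ, par_root] at hc'
      have hadj' := hadj
      rw [hbvρ, ← hc'] at hadj'
      exact T.irrefl hadj'
    · rw [if_neg hc]
      refine ⟨?_, hv⟩
      intro hvρ
      rcases par_orient hT ρ hadj with h1 | h2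
      · exact hc h1
      · subst hvρ
        rw [par_root] at h2
        have hadj' := hadj
        rw [← h2] at hadj'
        exact T.irrefl hadj'
  have hinj : Set.InjOn f R := by
    intro v1 hv1' v2 hv2' hf
    have hv1 : v1 ∈ R := hv1'
    have hv2 : v2 ∈ R := hv2'
    simp only [f, dif_pos hv1, dif_pos hv2] at hf
    by_cases hc1 : par hT ρ (bv v1 hv1) = v1 <;> by_cases hc2 : par hT ρ (bv v2 hv2) = v2
    · rw [if_pos hc1, if_pos hc2] at hf
      rw [← hc1, hf, hc2]
    · rw [if_pos hc1, if_neg hc2] at hf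
      exfalso
      subst hf
      rcases par_orient hT ρ (hbvadj (bv v1 hv1) hv2) with h1 | h2
      · exact hc2 h1
      · rw [hc1] at h2
        exact hnomut v1 hv1 h2.symm
    · rw [if_neg hc1, if_pos hc2] at hf
      exfalso
      subst hf
      rcases par_orient hT ρ (hbvadj (bv v2 hv2) hv1) with h1 | h2
      · exact hc1 h1
      · rw [hc2] at h2
        exact hnomut v2 hv2 h2.symm
    · rw [if_neg hc1, if_neg hc2] at hf
      exact hf
  have hcard := Finset.card_le_card_of_injOn f hmaps hinj
  rw [Finset.card_erase_of_mem hρ] at hcard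
  have : 1 ≤ R.card := Finset.card_pos.mpr ⟨ρ, hρ⟩
  omega

end ExistsGood

section MainInd
variable {I S : Type*}

lemma count_insert [DecidableEq I] [DecidableEq S] (R' : Finset I) (v : I) (hv : v ∉ R')
    (μ : I → Option S) (t : S) :
    ((insert v R').filter (fun i => μ i = some t)).card
      = (R'.filter (fun i => μ i = some t)).card + (if μ v = some t then 1 else 0) := by
  rw [Finset.filter_insert]
  by_cases h : μ v = some t
  · rw [if_pos h, if_pos h,
      Finset.card_insert_of_notMem (fun hc => hv (Finset.filter_subset _ _ hc))]
  · rw [if_neg h, if_neg h, add_zero]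

lemma filter_update [DecidableEq I] [DecidableEq S] (R' : Finset I) (v : I) (hv : v ∉ R')
    (μ' : I → Option S) (o : Option S) (t : S) :
    R'.filter (fun i => Function.update μ' v o i = some t)
      = R'.filter (fun i => μ' i = some t) := by
  apply Finset.filter_congr
  intro i hi
  simp [Function.update_of_ne (ne_of_mem_of_not_mem hi hv)]

lemma mainInd [Fintype I] [Fintype S] [DecidableEq I] [DecidableEq S]
    (T : SimpleGraph I) (hT : T.IsTree)
    (pI : StudentPrefs I S) (pS : SchoolPrefs I S)
    (hpI : ValidStudentPrefs pI)
    (hpSasym : ∀ (s : S) (x y : Option I), pS s x y → ¬ pS s y x)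
    (hSP : ∀ (s : S) (v u w : I), T.Adj v u → T.Adj v w →
      pS s (some u) (some v) → pS s (some w) (some v) → u = w) :
    ∀ (n : ℕ) (R : Finset I) (a : S → ℕ), R.card = n →
    ∃ μ : I → Option S,
      (∀ i, i ∉ R → μ i = none) ∧
      (∀ s, (R.filter (fun i => μ i = some s)).card ≤ a s) ∧
      (∀ μ' : I → Option S,
        (∀ s, (R.filter (fun i => μ' i = some s)).card ≤ a s) →
        (∀ i ∈ R, μ' i = μ i ∨ pI i (μ' i) (μ i)) →
        ∀ i ∈ R, μ' i = μ i) ∧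
      (∀ i ∈ R, ∀ i' ∈ R, T.Adj i i' → ¬ JEnvy pI pS μ i i') := by
  intro n
  induction n using Nat.strong_induction_on with
  | _ n IH =>
  intro R a hn
  rcases R.eq_empty_or_nonempty with rfl | hRne
  · exact ⟨fun _ => none, fun _ _ => rfl, by simp, by simp, by simp⟩
  -- preference helper facts
  have pIirr : ∀ (i : I) (x : Option S), ¬ pI i x x := by
    intro i x; letI := hpI i; exact irrefl_of (pI i) x
  have pItrans : ∀ (i : I) (x y z : Option S), pI i x y → pI i y z → pI i x z := by
    intro i x y z hxy hyz; letI := hpI i; exact trans_of (pI i) hxy hyz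
  -- best available option for each student
  have hBest : ∀ i : I, ∃ o : Option S,
      (o = none ∨ ∃ s, o = some s ∧ 1 ≤ a s) ∧
      (∀ x : Option S, (x = none ∨ ∃ s, x = some s ∧ 1 ≤ a s) → x ≠ o → pI i o x) := by
    intro i
    have hne : (insert none ((Finset.univ.filter (fun s => 1 ≤ a s)).image some) :
        Finset (Option S)).Nonempty := ⟨none, Finset.mem_insert_self _ _⟩
    obtain ⟨m, hm, hmax⟩ := myExistsMax (pI i) (hpI i) _ hne
    have hmem : ∀ x : Option S,
        x ∈ (insert none ((Finset.univ.filter (fun s => 1 ≤ a s)).image some) :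
          Finset (Option S)) ↔ (x = none ∨ ∃ s, x = some s ∧ 1 ≤ a s) := by
      intro x
      simp only [Finset.mem_insert, Finset.mem_image, Finset.mem_filter, Finset.mem_univ,
        true_and]
      constructor
      · rintro (rfl | ⟨s, hs, rfl⟩)
        · exact Or.inl rfl
        · exact Or.inr ⟨s, rfl, hs⟩
      · rintro (rfl | ⟨s, rfl, hs⟩)
        · exact Or.inl rfl
        · exact Or.inr ⟨s, hs, rfl⟩
    exact ⟨m, (hmem m).mp hm, fun x hx hne' => hmax x ((hmem x).mpr hx) hne'⟩
  choose best hbestmem hbestmax using hBest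
  have havail : ∀ (i : I) (t : S), best i = some t → 1 ≤ a t := by
    intro i t ht
    rcases hbestmem i with h | ⟨s0, hs0, hle⟩
    · rw [ht] at h; cases h
    · rw [ht] at hs0; injection hs0 with h'; exact h' ▸ hle
  have hnpos : 1 ≤ n := hn ▸ Finset.card_pos.mpr hRne
  obtain ⟨v, hvR, hgood⟩ := existsGood T hT pS R hRne best
  rcases hgood with hsafe | ⟨p, hpR, s, s', hbv, hbp, hadj, hps1, hps2⟩
  · -- SAFE CASE
    set o := best v with ho
    set a' : S → ℕ := fun t => if o = some t then a t - 1 else a t with ha'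
    have hsum : ∀ t, a t = a' t + (if o = some t then 1 else 0) := by
      intro t
      by_cases h : o = some t
      · have := havail v t (ho ▸ h)
        simp only [ha', if_pos h]
        omega
      · simp [ha', if_neg h]
    have ha'le : ∀ t, a' t ≤ a t := by
      intro t; rw [hsum t]; omega
    have hvnotR' : v ∉ R.erase v := Finset.notMem_erase _ _
    have hins : insert v (R.erase v) = R := Finset.insert_erase hvR
    have hR' : (R.erase v).card = n - 1 := by rw [Finset.card_erase_of_mem hvR, hn]
    obtain ⟨μ', h0', h1', h2', h3'⟩ := IH (n - 1) (by omega) (R.erase v) a' hR'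
    set μ : I → Option S := Function.update μ' v o with hμ
    have hveq : μ v = o := Function.update_self _ _ _
    have hne_eq : ∀ i, i ≠ v → μ i = μ' i := fun i hi => Function.update_of_ne hi _ _
    refine ⟨μ, ?_, ?_, ?_, ?_⟩
    · intro i hi
      have hiv : i ≠ v := fun h => hi (h ▸ hvR)
      rw [hne_eq i hiv]
      exact h0' i (fun hc => hi (Finset.mem_of_mem_erase hc))
    · intro t
      rw [← hins, count_insert _ v hvnotR' μ t, hveq]
      have hfc : (R.erase v).filter (fun i => μ i = some t)
          = (R.erase v).filter (fun i => μ' i = some t) := by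
        rw [hμ]; exact filter_update _ v hvnotR' μ' o t
      rw [hfc, hsum t]
      exact Nat.add_le_add_right (h1' t) _
    · intro μd hfeas hweak
      have hvd : μd v = o := by
        rcases hweak v hvR with he | hpref
        · rw [he, hveq]
        · exfalso
          rw [hveq] at hpref
          rcases hμv : μd v with _ | s₀
          · rw [hμv] at hpref
            by_cases hoN : o = none
            · rw [hoN] at hpref; exact pIirr v none hpref
            · exact pIirr v none
                (pItrans v none o none hpref (hbestmax v none (Or.inl rfl) (fun h => hoN h.symm)))
          · rw [hμv] at hpref
            by_cases h1 : 1 ≤ a s₀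
            · by_cases heq : (some s₀ : Option S) = o
              · rw [heq] at hpref; exact pIirr v o hpref
              · exact pIirr v o
                  (pItrans v o (some s₀) o (hbestmax v (some s₀) (Or.inr ⟨s₀, rfl, h1⟩) heq) hpref)
            · have hmemf : v ∈ R.filter (fun i => μd i = some s₀) :=
                Finset.mem_filter.mpr ⟨hvR, hμv⟩
              have h2 := hfeas s₀
              have hpos : 0 < (R.filter (fun i => μd i = some s₀)).card :=
                Finset.card_pos.mpr ⟨v, hmemf⟩
              omega
      have hfeas' : ∀ t, ((R.erase v).filter (fun i => μd i = some t)).card ≤ a' t := by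
        intro t
        have hcount := count_insert (R.erase v) v hvnotR' μd t
        rw [hins, hvd] at hcount
        have h2 := hfeas t
        rw [hcount, hsum t] at h2
        omega
      have hweak' : ∀ i ∈ R.erase v, μd i = μ' i ∨ pI i (μd i) (μ' i) := by
        intro i hi
        have hiv := Finset.ne_of_mem_erase hi
        have h2 := hweak i (Finset.mem_of_mem_erase hi)
        rwa [hne_eq i hiv] at h2
      intro i hiR
      by_cases hiv : i = v
      · subst hiv; rw [hvd, hveq]
      · rw [hne_eq i hiv]; exact h2' μd hfeas' hweak' i (Finset.mem_erase.mpr ⟨hiv, hiR⟩)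
    · rintro i hi i' hi' hadj' ⟨s₀, hs₀, hprefE, hpSE⟩
      by_cases hi'v : i' = v
      · rw [hi'v, hveq] at hs₀
        rw [hi'v] at hpSE hadj'
        exact hsafe s₀ (ho ▸ hs₀) i hi hadj'.symm hpSE
      · by_cases hiv : i = v
        · have hi'R' : i' ∈ R.erase v := Finset.mem_erase.mpr ⟨hi'v, hi'⟩
          rw [hne_eq i' hi'v] at hs₀
          have hc : 1 ≤ ((R.erase v).filter (fun j => μ' j = some s₀)).card :=
            Finset.card_pos.mpr ⟨i', Finset.mem_filter.mpr ⟨hi'R', hs₀⟩⟩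
          have ha1 : 1 ≤ a s₀ := le_trans (le_trans hc (h1' s₀)) (ha'le s₀)
          rw [hiv, hveq] at hprefE
          by_cases heq : (some s₀ : Option S) = o
          · rw [heq] at hprefE; exact pIirr v o hprefE
          · exact pIirr v o
              (pItrans v o (some s₀) o (hbestmax v (some s₀) (Or.inr ⟨s₀, rfl, ha1⟩) heq) hprefE)
        · have hiR' : i ∈ R.erase v := Finset.mem_erase.mpr ⟨hiv, hi⟩
          have hi'R' : i' ∈ R.erase v := Finset.mem_erase.mpr ⟨hi'v, hi'⟩
          refine h3' i hiR' i' hi'R' hadj' ⟨s₀, ?_, ?_, hpSE⟩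
          · rw [← hne_eq i' hi'v]; exact hs₀
          · rw [← hne_eq i hiv]; exact hprefE
  · -- MUTUAL CASE
    have hvp : v ≠ p := hadj.ne
    have has : 1 ≤ a s := havail v s hbv
    have has' : 1 ≤ a s' := havail p s' hbp
    have hss' : s ≠ s' := fun h => hpSasym s _ _ hps1 (h ▸ hps2)
    set a'' : S → ℕ := fun t => if t = s then a t - 1 else (if t = s' then a t - 1 else a t)
      with ha''
    have hsum : ∀ t, a t = a'' t + (if t = s then 1 else 0) + (if t = s' then 1 else 0) := by
      intro t
      by_cases h1 : t = s
      · subst h1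
        simp only [ha'', if_pos rfl, if_neg hss']
        simp [hss']
        omega
      · by_cases h2 : t = s'
        · subst h2
          simp only [ha'', if_neg h1, if_pos rfl]
          simp [h1]
          omega
        · simp [ha'', h1, h2]
    have ha''le : ∀ t, a'' t ≤ a t := by intro t; rw [hsum t]; omega
    have hpv : p ≠ v := Ne.symm hvp
    have hpR' : p ∈ R.erase v := Finset.mem_erase.mpr ⟨hpv, hpR⟩
    have hvnotR' : v ∉ R.erase v := Finset.notMem_erase _ _
    set R'' : Finset I := (R.erase v).erase p with hR''def
    have hpnotR'' : p ∉ R'' := Finset.notMem_erase _ _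
    have hvnotR'' : v ∉ R'' := fun hc => hvnotR' (Finset.mem_of_mem_erase hc)
    have hins2 : insert p R'' = R.erase v := Finset.insert_erase hpR'
    have hins1 : insert v (R.erase v) = R := Finset.insert_erase hvR
    have hR''card : R''.card = n - 2 := by
      rw [hR''def, Finset.card_erase_of_mem hpR', Finset.card_erase_of_mem hvR, hn]
      omega
    obtain ⟨μ'', h0'', h1'', h2'', h3''⟩ := IH (n - 2) (by omega) R'' a'' hR''card
    set μ : I → Option S := Function.update (Function.update μ'' p (some s')) v (some s) with hμ
    have hμv : μ v = some s := Function.update_self _ _ _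
    have hμp : μ p = some s' := by
      rw [hμ, Function.update_of_ne hpv, Function.update_self]
    have hμother : ∀ i, i ≠ v → i ≠ p → μ i = μ'' i := by
      intro i h1 h2
      rw [hμ, Function.update_of_ne h1, Function.update_of_ne h2]
    have hmax_v : ∀ x : Option S, (x = none ∨ ∃ t, x = some t ∧ 1 ≤ a t) →
        x ≠ some s → pI v (some s) x := by
      intro x hx hne'
      have := hbestmax v x hx (fun h => hne' (h.trans hbv))
      rwa [hbv] at this
    have hmax_p : ∀ x : Option S, (x = none ∨ ∃ t, x = some t ∧ 1 ≤ a t) →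
        x ≠ some s' → pI p (some s') x := by
      intro x hx hne'
      have := hbestmax p x hx (fun h => hne' (h.trans hbp))
      rwa [hbp] at this
    have hps' : pI p (some s') (some s) :=
      hmax_p (some s) (Or.inr ⟨s, rfl, has⟩) (fun h => hss' (Option.some.inj h))
    have hpv' : pI v (some s) (some s') :=
      hmax_v (some s') (Or.inr ⟨s', rfl, has'⟩) (fun h => hss' (Option.some.inj h).symm)
    have hindflip : ∀ (x t : S), ((if (some x : Option S) = some t then 1 else 0) : ℕ)
        = if t = x then 1 else 0 := by
      intro x t
      by_cases h : t = x
      · simp [h]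
      · rw [if_neg (fun hc => h (Option.some.inj hc).symm), if_neg h]
    refine ⟨μ, ?_, ?_, ?_, ?_⟩
    · intro i hi
      have h1 : i ≠ v := fun h => hi (h ▸ hvR)
      have h2 : i ≠ p := fun h => hi (h ▸ hpR)
      rw [hμother i h1 h2]
      exact h0'' i (fun hc => hi (Finset.mem_of_mem_erase (Finset.mem_of_mem_erase hc)))
    · intro t
      rw [← hins1, count_insert _ v hvnotR' μ t, hμv, ← hins2,
        count_insert _ p hpnotR'' μ t, hμp]
      have hfc : R''.filter (fun i => μ i = some t) = R''.filter (fun i => μ'' i = some t) := by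
        apply Finset.filter_congr
        intro i hi
        have h1 : i ≠ v := fun h => hvnotR'' (h ▸ hi)
        have h2 : i ≠ p := fun h => hpnotR'' (h ▸ hi)
        simp [hμother i h1 h2]
      rw [hfc, hsum t, hindflip s t, hindflip s' t]
      have := h1'' t
      omega
    · intro μd hfeas hweak
      have hvd : μd v = some s := by
        rcases hweak v hvR with he | hpref
        · rw [he, hμv]
        · exfalso
          rw [hμv] at hpref
          rcases hμvd : μd v with _ | s₀
          · rw [hμvd] at hpref
            exact pIirr v none
              (pItrans v none (some s) none hpref (hmax_v none (Or.inl rfl) (by simp)))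
          · rw [hμvd] at hpref
            by_cases h1 : 1 ≤ a s₀
            · by_cases heq : (some s₀ : Option S) = some s
              · rw [heq] at hpref; exact pIirr v (some s) hpref
              · exact pIirr v (some s)
                  (pItrans v (some s) (some s₀) (some s)
                    (hmax_v (some s₀) (Or.inr ⟨s₀, rfl, h1⟩) heq) hpref)
            · have hmemf : v ∈ R.filter (fun i => μd i = some s₀) :=
                Finset.mem_filter.mpr ⟨hvR, hμvd⟩
              have h2 := hfeas s₀
              have hpos : 0 < (R.filter (fun i => μd i = some s₀)).card :=
                Finset.card_pos.mpr ⟨v, hmemf⟩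
              omega
      have hpd : μd p = some s' := by
        rcases hweak p hpR with he | hpref
        · rw [he, hμp]
        · exfalso
          rw [hμp] at hpref
          rcases hμpd : μd p with _ | s₀
          · rw [hμpd] at hpref
            exact pIirr p none
              (pItrans p none (some s') none hpref (hmax_p none (Or.inl rfl) (by simp)))
          · rw [hμpd] at hpref
            by_cases h1 : 1 ≤ a s₀
            · by_cases heq : (some s₀ : Option S) = some s'
              · rw [heq] at hpref; exact pIirr p (some s') hpref
              · exact pIirr p (some s')
                  (pItrans p (some s') (some s₀) (some s')
                    (hmax_p (some s₀) (Or.inr ⟨s₀, rfl, h1⟩) heq) hpref)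
            · have hmemf : p ∈ R.filter (fun i => μd i = some s₀) :=
                Finset.mem_filter.mpr ⟨hpR, hμpd⟩
              have h2 := hfeas s₀
              have hpos : 0 < (R.filter (fun i => μd i = some s₀)).card :=
                Finset.card_pos.mpr ⟨p, hmemf⟩
              omega
      have hfeas'' : ∀ t, (R''.filter (fun i => μd i = some t)).card ≤ a'' t := by
        intro t
        have hc1 := count_insert (R.erase v) v hvnotR' μd t
        rw [hins1, hvd] at hc1
        have hc2 := count_insert R'' p hpnotR'' μd t
        rw [hins2, hpd] at hc2
        have h2 := hfeas t
        rw [hc1, hc2, hsum t, hindflip s t, hindflip s' t] at h2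
        omega
      have hweak'' : ∀ i ∈ R'', μd i = μ'' i ∨ pI i (μd i) (μ'' i) := by
        intro i hi
        have h1 : i ≠ v := fun h => hvnotR'' (h ▸ hi)
        have h2 : i ≠ p := fun h => hpnotR'' (h ▸ hi)
        have h3 := hweak i (Finset.mem_of_mem_erase (Finset.mem_of_mem_erase hi))
        rwa [hμother i h1 h2] at h3
      intro i hiR
      by_cases hiv : i = v
      · subst hiv; rw [hvd, hμv]
      · by_cases hip : i = p
        · subst hip; rw [hpd, hμp]
        · rw [hμother i hiv hip]
          exact h2'' μd hfeas'' hweak'' i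
            (Finset.mem_erase.mpr ⟨hip, Finset.mem_erase.mpr ⟨hiv, hiR⟩⟩)
    · rintro i hi i' hi' hadj' ⟨s₀, hs₀, hprefE, hpSE⟩
      by_cases hi'v : i' = v
      · rw [hi'v, hμv] at hs₀
        have hse : s = s₀ := Option.some.inj hs₀
        rw [hi'v] at hpSE hadj'
        have hip : i = p := hSP s₀ v i p hadj'.symm hadj hpSE (hse ▸ hps1)
        rw [hip, hμp] at hprefE
        exact pIirr p (some s₀) (pItrans p (some s₀) (some s') (some s₀) hprefE (hse ▸ hps'))
      · by_cases hi'p : i' = p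
        · rw [hi'p, hμp] at hs₀
          have hse : s' = s₀ := Option.some.inj hs₀
          rw [hi'p] at hpSE hadj'
          have hiv : i = v := hSP s₀ p i v hadj'.symm hadj.symm hpSE (hse ▸ hps2)
          rw [hiv, hμv] at hprefE
          exact pIirr v (some s₀) (pItrans v (some s₀) (some s) (some s₀) hprefE (hse ▸ hpv'))
        · have hi'R'' : i' ∈ R'' :=
            Finset.mem_erase.mpr ⟨hi'p, Finset.mem_erase.mpr ⟨hi'v, hi'⟩⟩
          rw [hμother i' hi'v hi'p] at hs₀
          have hc : 1 ≤ (R''.filter (fun j => μ'' j = some s₀)).card :=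
            Finset.card_pos.mpr ⟨i', Finset.mem_filter.mpr ⟨hi'R'', hs₀⟩⟩
          have ha1 : 1 ≤ a s₀ := le_trans (le_trans hc (h1'' s₀)) (ha''le s₀)
          by_cases hiv : i = v
          · rw [hiv, hμv] at hprefE
            by_cases heq : (some s₀ : Option S) = some s
            · rw [heq] at hprefE; exact pIirr v (some s) hprefE
            · exact pIirr v (some s)
                (pItrans v (some s) (some s₀) (some s)
                  (hmax_v (some s₀) (Or.inr ⟨s₀, rfl, ha1⟩) heq) hprefE)
          · by_cases hip : i = p
            · rw [hip, hμp] at hprefE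
              by_cases heq : (some s₀ : Option S) = some s'
              · rw [heq] at hprefE; exact pIirr p (some s') hprefE
              · exact pIirr p (some s')
                  (pItrans p (some s') (some s₀) (some s')
                    (hmax_p (some s₀) (Or.inr ⟨s₀, rfl, ha1⟩) heq) hprefE)
            · have hiR'' : i ∈ R'' :=
                Finset.mem_erase.mpr ⟨hip, Finset.mem_erase.mpr ⟨hiv, hi⟩⟩
              exact h3'' i hiR'' i' hi'R'' hadj' ⟨s₀, hs₀, by
                rw [← hμother i hiv hip]; exact hprefE, hpSE⟩

end MainInd

end ProofAux

/-- if `G` contains a spanning tree `T` with every vertex incident to at most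
`k - 1` non-tree edges, and schools' preferences are single-peaked on `T`, then a feasible
matching exists that is Pareto efficient, locally EF-(k-1), and locally ERF-(k-1). -/
theorem pe_locef_locerf_on_tree_plus_edges {I S : Type*} [Fintype I] [Fintype S] [Nonempty I]
    (k : ℕ) (hk : 1 ≤ k)
    (G T : SimpleGraph I) (hTG : T ≤ G) (hT : T.IsTree)
    (hextra : ∀ i : I, {i' | G.Adj i i' ∧ ¬ T.Adj i i'}.ncard ≤ k - 1)
    (pI : StudentPrefs I S) (pS : SchoolPrefs I S) (q : S → ℕ)
    (hpI : ValidStudentPrefs pI) (hpS : ValidSchoolPrefs pS)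
    (hsp : ∀ s : S, SinglePeakedOn T (fun i i' => pS s (some i) (some i'))) :
    ∃ μ : I → Option S, Feasible q μ ∧ ParetoEfficient pI q μ ∧
      LocEF G pI pS (k - 1) μ ∧ LocERF G pI pS (k - 1) μ := by
  classical
  letI : DecidableEq I := Classical.decEq I
  letI : DecidableEq S := Classical.decEq S
  have hpSasym : ∀ (s : S) (x y : Option I), pS s x y → ¬ pS s y x := by
    intro s x y hxy hyx
    letI := hpS s
    exact irrefl_of (pS s) x (trans_of (pS s) hxy hyx)
  have hSP : ∀ (s : S) (v u w : I), T.Adj v u → T.Adj v w →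
      pS s (some u) (some v) → pS s (some w) (some v) → u = w := by
    intro s v u w hvu hvw hu hw
    refine spStar T hT (fun i i' => pS s (some i) (some i')) ?_ ?_ (hsp s) hvu hvw hu hw
    · intro x hx
      letI := hpS s
      exact irrefl_of (pS s) _ hx
    · intro a b c hab hbc
      letI := hpS s
      exact trans_of (pS s) hab hbc
  obtain ⟨μ, h0, h1, h2, h3⟩ :=
    mainInd T hT pI pS hpI hpSasym hSP Finset.univ.card Finset.univ q rfl
  have hset : ∀ (μ0 : I → Option S) (s : S),
      {i | μ0 i = some s}.ncard = (Finset.univ.filter (fun i => μ0 i = some s)).card := by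
    intro μ0 s
    rw [← Set.ncard_coe_finset]
    congr 1
    ext i
    simp
  refine ⟨μ, ?_, ?_, ?_, ?_⟩
  · intro s
    rw [hset]
    exact h1 s
  · intro μ' hfeas hdom
    obtain ⟨hweak, i0, hstr⟩ := hdom
    have heq : μ' i0 = μ i0 :=
      h2 μ' (fun s => by rw [← hset]; exact hfeas s) (fun i _ => hweak i) i0 (Finset.mem_univ _)
    rw [heq] at hstr
    letI := hpI i0
    exact irrefl_of (pI i0) _ hstr
  · intro i
    have hsub : {i' | LocalEnvy G pI pS μ i i'} ⊆ {i' | G.Adj i i' ∧ ¬ T.Adj i i'} := by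
      rintro i' ⟨hJ, hAdj⟩
      exact ⟨hAdj, fun hTadj => h3 i (Finset.mem_univ _) i' (Finset.mem_univ _) hTadj hJ⟩
    exact le_trans (Set.ncard_le_ncard hsub (Set.toFinite _)) (hextra i)
  · intro i
    have hsub : {i' | LocalEnvy G pI pS μ i' i} ⊆ {i' | G.Adj i i' ∧ ¬ T.Adj i i'} := by
      rintro i' ⟨hJ, hAdj⟩
      exact ⟨hAdj.symm, fun hTadj => h3 i' (Finset.mem_univ _) i (Finset.mem_univ _) hTadj.symm hJ⟩
    exact le_trans (Set.ncard_le_ncard hsub (Set.toFinite _)) (hextra i)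
end
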